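/- arXiv:2501.12350 — 2 statements merged into one kernel-verified Lean document; each statement's English description precedes it below -/
import Mathlib

section
/- In the Riordan Hopf algebra Rio, for any s ∈ K and k ∈ Z_{≥0}, the following identity of power series in x with coefficients in Rio ⊗ Rio holds (Δ applied coefficientwise): Δ(Y(x)^s Π(x)^k) = Σ_{j≥0} Y(x)^s Π(x)^j ⊗ [x^j](Y(x)^s Π(x)^k). -/
open scoped TensorProduct

namespace CK

/-! ### Decorated rooted trees, represented by finite prefix-closed sets of addresses.

A vertex is an address `v : List ℕ` (the root is `[]`, children of `v` are `v ++ [n]`).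
The partial order of the tree: `u ≤ v` iff `v` is a prefix of `u` (the root is the maximum).
`vdec v` is the decoration of the vertex `v`, and `edec v` is the decoration of the edge
joining a non-root vertex `v` to its parent, recorded together with the decoration of the
parent (an element of `Σ i, E i`). -/
structure PreTree (I : Type) (E : I → Type) : Type where
  supp : Finset (List ℕ)
  vdec : List ℕ → I
  edec : List ℕ → Option (Σ i : I, E i)

variable {I : Type} {E : I → Type}

/-- Well-formedness: the root address belongs to the tree, the support is closed under
prefixes, and the decoration of the edge from `u` to its child `u ++ [n]` is of the form
`⟨vdec u, e⟩` with `e : E (vdec u)`. -/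
def PreTree.WF (t : PreTree I E) : Prop :=
  ([] ∈ t.supp) ∧
  (∀ v ∈ t.supp, ∀ w : List ℕ, w <+: v → w ∈ t.supp) ∧
  (∀ (u : List ℕ) (n : ℕ), u ++ [n] ∈ t.supp →
    ∃ e : E (t.vdec u), t.edec (u ++ [n]) = some ⟨t.vdec u, e⟩)

/-- Isomorphism of decorated rooted trees: a bijection of the vertex sets preserving the
root, the tree structure and the decorations of vertices and edges. -/
def PreTree.Iso (t s : PreTree I E) : Prop :=
  ∃ f : List ℕ → List ℕ,
    Set.BijOn f ↑t.supp ↑s.supp ∧ f [] = [] ∧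
    (∀ (u : List ℕ) (n : ℕ), u ++ [n] ∈ t.supp → ∃ m : ℕ, f (u ++ [n]) = f u ++ [m]) ∧
    (∀ v ∈ t.supp, s.vdec (f v) = t.vdec v) ∧
    (∀ v ∈ t.supp, v ≠ [] → s.edec (f v) = t.edec v)

/-- Well-formed decorated rooted trees. -/
def WFTree (I : Type) (E : I → Type) : Type := {t : PreTree I E // t.WF}

/-- Isomorphism classes of (well-formed) decorated rooted trees. -/
def TreeCl (I : Type) (E : I → Type) : Type := Quot fun a b : WFTree I E => a.1.Iso b.1

/-- Isomorphism classes of decorated rooted forests: multisets of tree classes. -/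
def Forest (I : Type) (E : I → Type) : Type := Multiset (TreeCl I E)

instance : AddCancelCommMonoid (Forest I E) := inferInstanceAs (AddCancelCommMonoid (Multiset (TreeCl I E)))
instance : DecidableEq (List ℕ) := inferInstance

/-- The class of a well-formed tree. -/
def toCl (t : PreTree I E) (h : t.WF) : TreeCl I E := Quot.mk _ ⟨t, h⟩

/-- A representative of an isomorphism class of trees. -/
noncomputable def rep (c : TreeCl I E) : PreTree I E := (Quot.out c).1

theorem rep_wf (c : TreeCl I E) : (rep c).WF := (Quot.out c).2

/-- The decoration of the root of (a representative of) a tree class. -/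
noncomputable def rootDec (c : TreeCl I E) : I := (rep c).vdec []

/-- The children of a vertex `v` in a tree. -/
def childrenAt (t : PreTree I E) (v : List ℕ) : Finset (List ℕ) :=
  t.supp.filter fun c => c ≠ [] ∧ c.dropLast = v

/-- Total weight of a tree with respect to a weight function on the vertex decorations. -/
def wtPre (w : I → ℕ) (t : PreTree I E) : ℕ := ∑ v ∈ t.supp, w (t.vdec v)

noncomputable def wtCl (w : I → ℕ) (c : TreeCl I E) : ℕ := wtPre w (rep c)

/-- The automorphisms of a decorated rooted tree: bijections of the vertex set fixing the
root, preserving the covering relation (children map to children) and all decorations. -/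
def AutSet (t : PreTree I E) : Set ({v // v ∈ t.supp} ≃ {v // v ∈ t.supp}) :=
  {g | (∀ h : ([] : List ℕ) ∈ t.supp, (g ⟨[], h⟩).1 = []) ∧
    (∀ (u : List ℕ) (n : ℕ) (hu : u ∈ t.supp) (h : u ++ [n] ∈ t.supp),
      ∃ m : ℕ, (g ⟨u ++ [n], h⟩).1 = (g ⟨u, hu⟩).1 ++ [m]) ∧
    (∀ (v : List ℕ) (h : v ∈ t.supp), t.vdec (g ⟨v, h⟩).1 = t.vdec v) ∧
    (∀ (v : List ℕ) (h : v ∈ t.supp), v ≠ [] → t.edec (g ⟨v, h⟩).1 = t.edec v)}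

/-- The order of the automorphism group of a decorated rooted tree. -/
noncomputable def autCard (t : PreTree I E) : ℕ := (AutSet t).ncard

noncomputable def autCardCl (c : TreeCl I E) : ℕ := autCard (rep c)

end CK
namespace CK

variable {I : Type} {E : I → Type}

/-- Grafting at the level of raw trees: given a root decoration `i` and a list of pairs
(edge decoration, tree), form the tree whose root is decorated `i` and whose `j`-th root
edge carries the `j`-th edge decoration and leads to the `j`-th tree. -/
def graftPre (i : I) (l : List (E i × PreTree I E)) : PreTree I E where
  supp := insert [] ((Finset.range l.length).biUnion fun j =>
    ((l[j]?.elim ∅ fun p => p.2.supp).image fun v => j :: v))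
  vdec v :=
    match v with
    | [] => i
    | j :: v' => (l[j]?.elim i fun p => p.2.vdec v')
  edec v :=
    match v with
    | [] => none
    | j :: v' => (l[j]?.elim none fun p =>
        if v' = [] then some ⟨i, p.1⟩ else p.2.edec v')

theorem mem_graftPre_supp (i : I) (l : List (E i × PreTree I E)) (v : List ℕ) :
    v ∈ (graftPre i l).supp ↔
      v = [] ∨ ∃ j : ℕ, j < l.length ∧ ∃ v' : List ℕ,
        v = j :: v' ∧ v' ∈ (l[j]?.elim ∅ fun p => p.2.supp) := by
  simp only [graftPre, Finset.mem_insert, Finset.mem_biUnion, Finset.mem_range,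
    Finset.mem_image]
  constructor
  · rintro (h | ⟨j, hj, v', hv', rfl⟩)
    · exact Or.inl h
    · exact Or.inr ⟨j, hj, v', rfl, hv'⟩
  · rintro (h | ⟨j, hj, v', rfl, hv'⟩)
    · exact Or.inl h
    · exact Or.inr ⟨j, hj, v', hv', rfl⟩

theorem graftPre_wf (i : I) (l : List (E i × PreTree I E))
    (hl : ∀ p ∈ l, p.2.WF) : (graftPre i l).WF := by
  refine ⟨Finset.mem_insert_self _ _, ?_, ?_⟩
  · intro v hv w hw
    rw [mem_graftPre_supp] at hv ⊢
    rcases hv with rfl | ⟨j, hj, v', rfl, hv'⟩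
    · left; exact List.prefix_nil.mp hw
    · rcases w with _ | ⟨a, w'⟩
      · exact Or.inl rfl
      · rw [List.cons_prefix_cons] at hw
        obtain ⟨rfl, hw'⟩ := hw
        right
        refine ⟨a, hj, w', rfl, ?_⟩
        have hget : l[a]? = some l[a] := List.getElem?_eq_getElem hj
        simp only [hget, Option.elim_some] at hv' ⊢
        exact (hl _ (List.getElem_mem hj)).2.1 v' hv' w' hw'
  · intro u n hun
    rw [mem_graftPre_supp] at hun
    rcases hun with h | ⟨j, hj, v', hv, hv'⟩
    · simp at h
    · have hget : l[j]? = some l[j] := List.getElem?_eq_getElem hj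
      simp only [hget, Option.elim_some] at hv'
      rcases u with _ | ⟨a, u'⟩
      · simp only [List.nil_append] at hv
        obtain ⟨rfl, rfl⟩ := List.cons.inj hv
        exact ⟨l[n].1, by simp [graftPre, hget]⟩
      · have hv2 : a :: (u' ++ [n]) = j :: v' := by simpa using hv
        obtain ⟨rfl, rfl⟩ := List.cons.inj hv2
        obtain ⟨e, he⟩ := (hl _ (List.getElem_mem hj)).2.2 u' n hv'
        have hvd : (graftPre i l).vdec (a :: u') = l[a].2.vdec u' := by
          simp [graftPre, hget]
        have hed : (graftPre i l).edec ((a :: u') ++ [n]) = l[a].2.edec (u' ++ [n]) := by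
          simp only [List.cons_append]
          simp [graftPre, hget]
        rw [hvd, hed]
        exact ⟨e, he⟩

end CK
namespace CK

variable {I : Type} {E : I → Type}

theorem graftList_wf (i : I) [Fintype (E i)] (fv : E i → Forest I E) :
    ∀ p ∈ ((Finset.univ : Finset (E i)).toList.flatMap fun e =>
      (fv e).toList.map fun c => (e, rep c)), p.2.WF := by
  intro p hp
  simp only [List.mem_flatMap, List.mem_map] at hp
  obtain ⟨e, -, c, -, rfl⟩ := hp
  exact rep_wf c

/-- Grafting at the level of isomorphism classes: `graftF i fv` is (the class of) the tree
obtained from the disjoint union of the forests `fv e`, `e : E i`, by adjoining a new root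
decorated `i`, joined to the root of every component of `fv e` by an edge decorated `e`. -/
noncomputable def graftF (i : I) [Fintype (E i)] (fv : E i → Forest I E) : TreeCl I E :=
  toCl (graftPre i ((Finset.univ : Finset (E i)).toList.flatMap fun e =>
      (fv e).toList.map fun c => (e, rep c)))
    (graftPre_wf _ _ (graftList_wf i fv))

/-- The subtree (principal downset) of `t` rooted at the vertex `r`, with addresses
relative to `r`. -/
def subPre (t : PreTree I E) (r : List ℕ) : PreTree I E where
  supp := insert [] ((t.supp.filter fun v => r <+: v).image fun v => v.drop r.length)
  vdec v := t.vdec (r ++ v)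
  edec v := if v = [] then none else t.edec (r ++ v)

theorem subPre_wf (t : PreTree I E) (ht : t.WF) (r : List ℕ) : (subPre t r).WF := by
  refine ⟨Finset.mem_insert_self _ _, ?_, ?_⟩
  · intro v hv w hw
    simp only [subPre, Finset.mem_insert, Finset.mem_image, Finset.mem_filter] at hv ⊢
    rcases hv with rfl | ⟨v0, ⟨hv0, hr⟩, rfl⟩
    · left; exact List.prefix_nil.mp hw
    · right
      refine ⟨r ++ w, ⟨?_, List.prefix_append _ _⟩, by simp⟩
      obtain ⟨v1, rfl⟩ := hr
      simp only [List.drop_left] at hw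
      exact ht.2.1 _ hv0 _ ((List.prefix_append_right_inj r).mpr hw)
  · intro u n hun
    simp only [subPre, Finset.mem_insert, Finset.mem_image, Finset.mem_filter] at hun
    rcases hun with h | ⟨v0, ⟨hv0, hr⟩, hdrop⟩
    · simp at h
    · obtain ⟨v1, rfl⟩ := hr
      simp only [List.drop_left] at hdrop
      subst hdrop
      obtain ⟨e, he⟩ := ht.2.2 (r ++ u) n (by rw [← List.append_assoc] at hv0; exact hv0)
      refine ⟨e, ?_⟩
      show (if u ++ [n] = [] then none else t.edec (r ++ (u ++ [n]))) = _
      rw [if_neg (by simp), ← List.append_assoc]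
      exact he

noncomputable def subCl (t : PreTree I E) (ht : t.WF) (r : List ℕ) : TreeCl I E :=
  toCl (subPre t r) (subPre_wf t ht r)

/-- `D` is a nonempty-complement downset of the tree `t`:
a subset of the vertices closed under passing to descendants, not containing the root. -/
def IsCut (t : PreTree I E) (D : Finset (List ℕ)) : Prop :=
  D ⊆ t.supp ∧ ∀ v ∈ D, ∀ w ∈ t.supp, v <+: w → w ∈ D

/-- Remove a downset from a tree. -/
def complPre (t : PreTree I E) (D : Finset (List ℕ)) : PreTree I E where
  supp := insert [] (t.supp \ D)
  vdec := t.vdec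
  edec v := if v = [] then none else t.edec v

theorem complPre_wf (t : PreTree I E) (ht : t.WF) (D : Finset (List ℕ))
    (hD : ∀ v ∈ D, ∀ w ∈ t.supp, v <+: w → w ∈ D) : (complPre t D).WF := by
  refine ⟨Finset.mem_insert_self _ _, ?_, ?_⟩
  · intro v hv w hw
    simp only [complPre, Finset.mem_insert, Finset.mem_sdiff] at hv ⊢
    rcases hv with rfl | ⟨hv1, hv2⟩
    · left; exact List.prefix_nil.mp hw
    · rcases eq_or_ne w [] with rfl | hne
      · exact Or.inl rfl
      · right
        refine ⟨ht.2.1 v hv1 w hw, fun hwD => hv2 (hD w hwD v hv1 hw)⟩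
  · intro u n hun
    simp only [complPre, Finset.mem_insert, Finset.mem_sdiff] at hun
    rcases hun with h | ⟨h1, h2⟩
    · simp at h
    · obtain ⟨e, he⟩ := ht.2.2 u n h1
      refine ⟨e, ?_⟩
      show (if u ++ [n] = [] then none else t.edec (u ++ [n])) = _
      rw [if_neg (by simp)]
      exact he

noncomputable def complCl (t : PreTree I E) (ht : t.WF) (D : Finset (List ℕ))
    (hD : ∀ v ∈ D, ∀ w ∈ t.supp, v <+: w → w ∈ D) : TreeCl I E :=
  toCl (complPre t D) (complPre_wf t ht D hD)

/-- The forest induced by a downset `D` of a tree: one subtree for each minimal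
element of `D`. -/
noncomputable def downForest (t : PreTree I E) (ht : t.WF) (D : Finset (List ℕ)) :
    Forest I E :=
  ((D.filter fun r => r = [] ∨ r.dropLast ∉ D).val.map fun r => subCl t ht r)

instance : Singleton (TreeCl I E) (Forest I E) :=
  inferInstanceAs (Singleton (TreeCl I E) (Multiset (TreeCl I E)))

/-- All terms `(D, t ∖ D)` of the coproduct of a tree class `c`: `D` runs over the
downsets of (a representative of) `c`; the first component is the forest induced by `D`
and the second the complementary forest. -/
noncomputable def cutsTree (c : TreeCl I E) : Multiset (Forest I E × Forest I E) :=
  ((rep c).supp.powerset.val.map fun D =>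
    if hD : ∀ v ∈ D, ∀ w ∈ (rep c).supp, v <+: w → w ∈ D then
      ({(downForest (rep c) (rep_wf c) D,
         if ([] : List ℕ) ∈ D then 0 else {complCl (rep c) (rep_wf c) D hD})} :
        Multiset (Forest I E × Forest I E))
    else 0).sum

/-- All terms of the coproduct of a forest: products of cuts of the component trees. -/
noncomputable def cutsForest (f : Forest I E) : Multiset (Forest I E × Forest I E) :=
  f.toList.foldr (fun c acc =>
    (cutsTree c).bind fun p => acc.map fun q => (p.1 + q.1, p.2 + q.2)) {(0, 0)}

end CK
namespace CK

open scoped TensorProduct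

variable (K : Type) [Field K] [CharZero K]
variable {I : Type} {E : I → Type}

/-- The decorated Connes–Kreimer Hopf algebra: the free vector space on isomorphism
classes of decorated forests, with disjoint union of forests as multiplication. -/
abbrev HCK (I : Type) (E : I → Type) : Type := AddMonoidAlgebra K (Forest I E)

/-- The basis element of `HCK` given by a forest. -/
noncomputable def bF (f : Forest I E) : HCK K I E := AddMonoidAlgebra.single f 1

/-- The basis element of `HCK` given by a single tree. -/
noncomputable def bT (c : TreeCl I E) : HCK K I E := bF K ({c} : Forest I E)

/-- The coefficient of a forest in an element of `HCK`. -/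
noncomputable def coeF (h : HCK K I E) (f : Forest I E) : K := h.coeff f

/-- The coproduct of the Connes–Kreimer Hopf algebra: on a basis forest `F` it is the sum
of `D ⊗ (F ∖ D)` over all downsets `D` of `F`. -/
noncomputable def comulCK : HCK K I E →ₗ[K] HCK K I E ⊗[K] HCK K I E :=
  (Finsupp.lsum K fun f => LinearMap.toSpanSingleton K _
    (((cutsForest f).map fun p => bF K p.1 ⊗ₜ[K] bF K p.2).sum)) ∘ₗ
    (AddMonoidAlgebra.coeffLinearEquiv K).toLinearMap

open scoped Classical in
/-- The counit of the Connes–Kreimer Hopf algebra. -/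
noncomputable def counitCK : HCK K I E →ₗ[K] K :=
  (Finsupp.lsum K fun f => LinearMap.toSpanSingleton K _ (if f = 0 then (1 : K) else 0)) ∘ₗ
    (AddMonoidAlgebra.coeffLinearEquiv K).toLinearMap

/-- The grafting operator `B₊^{(i)}` evaluated on a tuple of basis forests, extended to a
function of tuples of arbitrary elements of `HCK` by multilinearity.  This realizes the
linear map `H^{⊗ E_i} → H` on the tensor power. -/
noncomputable def Bapp (i : I) [Fintype (E i)] (h : E i → HCK K I E) : HCK K I E :=
  ∑ᶠ fv : E i → Forest I E,
    (∏ e : E i, coeF K (h e) (fv e)) • bT K (graftF i fv)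

/-- The grafting operator for a single insertion place, as a linear map. -/
noncomputable def Bop (i : I) [Fintype (E i)] : HCK K I E →ₗ[K] HCK K I E :=
  (Finsupp.lsum K fun f => LinearMap.toSpanSingleton K _ (bT K (graftF i (fun _ => f)))) ∘ₗ
    (AddMonoidAlgebra.coeffLinearEquiv K).toLinearMap

end CK
namespace CK

open scoped TensorProduct
open PowerSeries

variable (K : Type) [Field K] [CharZero K]

/-- Falling factorial `u(u-1)⋯(u-m+1)` of a scalar. -/
def ffall (u : K) (m : ℕ) : K := ∏ k ∈ Finset.range m, (u - k)

/-- Generalized binomial coefficient `u(u-1)⋯(u-m+1)/m!`. -/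
noncomputable def binomC (u : K) (m : ℕ) : K := ffall K u m / (Nat.factorial m : K)

variable {K}

/-- Vector falling factorial `μ^{\underline α} = ∏ⱼ μⱼ(μⱼ-1)⋯(μⱼ-αⱼ+1)`. -/
def ffallVec {J : Type} [Fintype J] (μ : J → K) (α : J → ℕ) : K :=
  ∏ j : J, ffall K (μ j) (α j)

section BinomPow

variable {H : Type} [CommRing H] [Algebra K H]

/-- Binomial series power `F^u = Σ_m (u choose m) (F-1)^m` of a power series
(intended for `F` with constant term 1). -/
noncomputable def binomPow (u : K) (F : PowerSeries H) : PowerSeries H :=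
  PowerSeries.mk fun n =>
    ∑ m ∈ Finset.range (n + 1), binomC K u m • (PowerSeries.coeff n ((F - 1) ^ m))

/-- Apply a linear map coefficientwise to a power series. -/
noncomputable def lapp {M N : Type} [Semiring M] [Semiring N] [Module K M] [Module K N]
    (φ : M →ₗ[K] N) (S : PowerSeries M) : PowerSeries N :=
  PowerSeries.mk fun n => φ (PowerSeries.coeff n S)

end BinomPow

section PolyHopf

variable (K)

/-- The coproduct of the polynomial Hopf algebra `K[L]`, determined by
`Δ L = L ⊗ 1 + 1 ⊗ L`. -/
noncomputable def comulL : Polynomial K →ₐ[K] Polynomial K ⊗[K] Polynomial K :=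
  Polynomial.aeval (Polynomial.X ⊗ₜ[K] 1 + 1 ⊗ₜ[K] Polynomial.X)

/-- The counit of the polynomial Hopf algebra `K[L]`, i.e. evaluation at `L = 0`. -/
noncomputable def counitL : Polynomial K →ₐ[K] K := Polynomial.aeval 0

/-- A linear endomorphism of `K[L]` is a 1-cocycle if `Δ ∘ Λ = Λ ⊗ 1 + (id ⊗ Λ) ∘ Δ`. -/
def IsCocycleL (Λ : Polynomial K →ₗ[K] Polynomial K) : Prop :=
  ∀ f : Polynomial K,
    comulL K (Λ f) = Λ f ⊗ₜ[K] 1 + (TensorProduct.map LinearMap.id Λ) (comulL K f)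

variable (σ : Type) [Fintype σ] [DecidableEq σ]

/-- The comodule structure (coaction) of `K[L]` on `K[L_e : e ∈ σ]`, the `σ`-fold tensor
power of `K[L]`; it is the algebra morphism determined by `L_e ↦ L ⊗ 1 + 1 ⊗ L_e`. -/
noncomputable def coactMv :
    MvPolynomial σ K →ₐ[K] Polynomial K ⊗[K] MvPolynomial σ K :=
  MvPolynomial.aeval fun e => (Polynomial.X ⊗ₜ[K] 1 + 1 ⊗ₜ[K] MvPolynomial.X e)

/-- A linear map `K[L_e : e ∈ σ] → K[L]` is a 1-cocycle if
`Δ ∘ Λ = Λ ⊗ 1 + (id ⊗ Λ) ∘ δ` where `δ` is the coaction. -/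
def IsCocycleMv (Λ : MvPolynomial σ K →ₗ[K] Polynomial K) : Prop :=
  ∀ f : MvPolynomial σ K,
    comulL K (Λ f) = Λ f ⊗ₜ[K] 1 + (TensorProduct.map LinearMap.id Λ) (coactMv K σ f)

/-- The integro-differential operator
`f ↦ ∫₀^L A(∂/∂u_e : e ∈ σ) f |_{all u_e = u} du` associated with a formal power series
`A ∈ K[[L_e : e ∈ σ]]`. -/
noncomputable def intDiffOp (A : MvPowerSeries σ K) :
    MvPolynomial σ K →ₗ[K] Polynomial K :=
  (Finsupp.lsum K fun γ : σ →₀ ℕ => LinearMap.toSpanSingleton K _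
    (∑ᶠ α : σ →₀ ℕ,
      (MvPowerSeries.coeff α A *
        (∏ e ∈ γ.support ∪ α.support, ((γ e).descFactorial (α e) : K)) *
        (((γ - α).sum fun _ n => n) + 1 : K)⁻¹) •
      Polynomial.monomial (((γ - α).sum fun _ n => n) + 1) (1 : K))) ∘ₗ
    (AddMonoidAlgebra.coeffLinearEquiv K).toLinearMap

/-- Substitute `μ_e·L` for the variable `L_e` in a multivariate power series, obtaining a
single-variable power series. -/
noncomputable def diagSubst (μ : σ → K) (A : MvPowerSeries σ K) : PowerSeries K :=
  PowerSeries.mk fun n =>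
    ∑ᶠ α : σ →₀ ℕ, (if (α.sum fun _ m => m) = n then
      MvPowerSeries.coeff α A * ∏ e : σ, (μ e) ^ (α e) else 0)

/-- The single-variable integro-differential operator `f ↦ ∫₀^L A(d/du) f(u) du`. -/
noncomputable def intDiffOp1 (A : PowerSeries K) : Polynomial K →ₗ[K] Polynomial K :=
  LinearMap.comp (intDiffOp K Unit (fun α => PowerSeries.coeff (α ()) A))
    (MvPolynomial.pUnitAlgEquiv K).symm.toLinearMap

/-- `∂/∂L` applied coefficientwise to a power series (in `x`) with coefficients in `K[L]`. -/
noncomputable def dLs (G : PowerSeries (Polynomial K)) : PowerSeries (Polynomial K) :=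
  PowerSeries.mk fun n => Polynomial.derivative (PowerSeries.coeff n G)

/-- `∂/∂x` of a power series in `x`. -/
noncomputable def dXs {R : Type} [CommRing R] (G : PowerSeries R) : PowerSeries R :=
  PowerSeries.mk fun n => (n + 1 : ℕ) • PowerSeries.coeff (n + 1) G

/-- Embed a power series with coefficients in `K` into one with coefficients in `K[L]`. -/
noncomputable def liftC (b : PowerSeries K) : PowerSeries (Polynomial K) :=
  PowerSeries.map (Polynomial.C : K →+* Polynomial K) b

/-- The series of coefficients of `L` of a power series with coefficients in `K[L]`:
the anomalous dimension of a Green function. -/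
noncomputable def linCoeffSeries (G : PowerSeries (Polynomial K)) : PowerSeries K :=
  PowerSeries.mk fun n => (PowerSeries.coeff n G).coeff 1

/-- The renormalization group equation `(∂/∂L − β(x)·∂/∂x − γ(x)) G(x,L) = 0`. -/
def RGE (β γ : PowerSeries K) (G : PowerSeries (Polynomial K)) : Prop :=
  dLs K G = liftC K β * dXs G + liftC K γ * G

end PolyHopf

end CK
namespace CK

variable {I : Type} {E : I → Type}

/-! ### Tubings of rooted trees.

A tube of a rooted tree is a nonempty convex connected set of vertices; a binary tubing is
a maximal laminar family of tubes.  Recall that in our address representation the order of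
the tree is: `u ≤ v` iff `v` is a prefix of `u` (the root `[]` is the maximum). -/

/-- A tube: a nonempty convex connected subset of the vertices of `t`.  Equivalently, a
nonempty subset `S` of the vertices having a root `r` (an element of which all elements
of `S` are descendants) such that for any `v ∈ S` all vertices between `r` and `v` belong
to `S`. -/
def IsTube (t : PreTree I E) (S : Finset (List ℕ)) : Prop :=
  S.Nonempty ∧ S ⊆ t.supp ∧
    ∃ r ∈ S, (∀ v ∈ S, r <+: v) ∧
      (∀ v ∈ S, ∀ w : List ℕ, r <+: w → w <+: v → w ∈ S)

/-- A family of sets is laminar if any two members are nested or disjoint. -/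
def Laminar (τ : Finset (Finset (List ℕ))) : Prop :=
  ∀ A ∈ τ, ∀ B ∈ τ, A ⊆ B ∨ B ⊆ A ∨ Disjoint A B

/-- A binary tubing of a rooted tree: a maximal laminar family of tubes. -/
def IsBinaryTubing (t : PreTree I E) (τ : Finset (Finset (List ℕ))) : Prop :=
  (∀ S ∈ τ, IsTube t S) ∧ Laminar τ ∧
    ∀ τ' : Finset (Finset (List ℕ)),
      τ ⊆ τ' → (∀ S ∈ τ', IsTube t S) → Laminar τ' → τ' = τ

/-- The root of a tube: its unique element of minimal length. -/
noncomputable def tubeRoot (S : Finset (List ℕ)) : List ℕ :=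
  (S.val.toList.argmin List.length).getD []

/-- The parent tube of `S` in the tubing `τ` of `t`: the intersection of all tubes of `τ`
strictly containing `S` (together with the vertex set of `t`). -/
noncomputable def parentTube (t : PreTree I E) (τ : Finset (Finset (List ℕ)))
    (S : Finset (List ℕ)) : Finset (List ℕ) :=
  ((τ.filter fun T => S ⊂ T).val.toList).foldr (fun a b => a ∩ b) t.supp

/-- `S` is an upset of `T` (with respect to the tree order in which the root is maximal). -/
def IsUpsetIn (S T : Finset (List ℕ)) : Prop :=
  ∀ a ∈ S, ∀ b ∈ T, b <+: a → b ∈ S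

/-- An upper tube of a binary tubing: a member of `τ` which is an upset in its parent
tube. -/
def IsUpperTube (t : PreTree I E) (τ : Finset (Finset (List ℕ)))
    (S : Finset (List ℕ)) : Prop :=
  S ∈ τ ∧ ∃ T ∈ τ, S ⊂ T ∧ (∀ U ∈ τ, S ⊂ U → T ⊆ U) ∧ IsUpsetIn S T

/-- The lower tube corresponding to an upper tube `S`: the complement of `S` in its
parent tube. -/
noncomputable def lowerPartner (t : PreTree I E) (τ : Finset (Finset (List ℕ)))
    (S : Finset (List ℕ)) : Finset (List ℕ) :=
  parentTube t τ S \ S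

open scoped Classical in
/-- The type of an upper tube `S`: the decoration of the first edge on the path from the
root of `S` to the root of the corresponding lower tube. -/
noncomputable def tubeType (t : PreTree I E) (τ : Finset (Finset (List ℕ)))
    (S : Finset (List ℕ)) : Option (Σ i : I, E i) :=
  t.edec ((tubeRoot (lowerPartner t τ S)).take ((tubeRoot S).length + 1))

open scoped Classical in
/-- The rank vector of a vertex `v` in a tubing: for each edge type `e ∈ E_{d(v)}`, the
number of upper tubes of type `e` rooted at `v`. -/
noncomputable def rankVec (t : PreTree I E) (τ : Finset (Finset (List ℕ)))
    (v : List ℕ) : E (t.vdec v) → ℕ := fun e =>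
  (τ.filter fun S => IsUpperTube t τ S ∧ tubeRoot S = v ∧
    tubeType t τ S = some ⟨t.vdec v, e⟩).card

open scoped Classical in
/-- The (untyped) rank of a vertex `v` in a tubing: the number of upper tubes rooted
at `v`. -/
noncomputable def rank (t : PreTree I E) (τ : Finset (Finset (List ℕ)))
    (v : List ℕ) : ℕ :=
  (τ.filter fun S => IsUpperTube t τ S ∧ tubeRoot S = v).card

open scoped Classical in
/-- The statistic `b(τ)`: the number of tubes of `τ` containing the root of the tree. -/
noncomputable def bstat (τ : Finset (Finset (List ℕ))) : ℕ :=
  (τ.filter fun S => ([] : List ℕ) ∈ S).card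

variable (K : Type) [Field K] [CharZero K]

/-- The Mellin monomial of a tubing `τ` with respect to a family of coefficients
`a_{i,α}`: the product over the non-root vertices `v` of `a_{d(v), rk(τ,v)}`. -/
noncomputable def mel (a : (i : I) → (E i → ℕ) → K) (t : PreTree I E)
    (τ : Finset (Finset (List ℕ))) : K :=
  ∏ v ∈ t.supp.erase [], a (t.vdec v) (rankVec t τ v)

open scoped Classical in
/-- The `k`-th β-vector of a tubing: for each type `e`, the number of upper tubes of type
`e` containing the root, excluding the `k − 1` outermost upper tubes containing the
root. -/
noncomputable def betaVec (t : PreTree I E) (τ : Finset (Finset (List ℕ)))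
    (k : ℕ) : E (t.vdec []) → ℕ := fun e =>
  (τ.filter fun S => IsUpperTube t τ S ∧ ([] : List ℕ) ∈ S ∧
    tubeType t τ S = some ⟨t.vdec [], e⟩ ∧
    k - 1 ≤ (τ.filter fun T => IsUpperTube t τ T ∧ ([] : List ℕ) ∈ T ∧ S ⊂ T).card).card

/-- The contribution of all tubings of the tree `t` in the tubing expansion:
`Σ_{τ ∈ Tub(t)} mel(τ) Σ_{k=1}^{b(τ)} a_{d(t), β^k(τ)} L^k / k!`. -/
noncomputable def tubingPoly (a : (i : I) → (E i → ℕ) → K) (t : PreTree I E) :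
    Polynomial K :=
  ∑ᶠ τ ∈ {τ : Finset (Finset (List ℕ)) | IsBinaryTubing t τ},
    mel K a t τ • ∑ k ∈ Finset.Icc 1 (bstat τ),
      a (t.vdec []) (betaVec t τ k) • Polynomial.monomial k (((Nat.factorial k : K))⁻¹)

/-- The linear-term coefficient of the tubing expansion:
`σ(t) = Σ_{τ ∈ Tub(t)} a_{d(t), β¹(τ)} mel(τ)`. -/
noncomputable def tubingLin (a : (i : I) → (E i → ℕ) → K) (t : PreTree I E) : K :=
  ∑ᶠ τ ∈ {τ : Finset (Finset (List ℕ)) | IsBinaryTubing t τ},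
    a (t.vdec []) (betaVec t τ 1) * mel K a t τ

end CK
namespace CK

open scoped TensorProduct

variable (K : Type) [Field K] [CharZero K]

/-! ### The Riordan Hopf algebra and the Faà di Bruno Hopf algebra.

`Rio` is the polynomial algebra `K[π₁, π₂, …, y₁, y₂, …]`; the variable `Sum.inl m`
represents `π_{m+1}` and the variable `Sum.inr m` represents `y_{m+1}`. -/
abbrev Rio : Type := MvPolynomial (ℕ ⊕ ℕ) K

/-- The generator `π_n` (`n ≥ 1`) of `Rio`. -/
noncomputable def rioPi (n : ℕ) : Rio K := MvPolynomial.X (Sum.inl (n - 1))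

/-- The generator `y_n` (`n ≥ 1`) of `Rio`. -/
noncomputable def rioY (n : ℕ) : Rio K := MvPolynomial.X (Sum.inr (n - 1))

/-- The series `Π(x) = x + Σ_{n≥1} π_n x^{n+1}`. -/
noncomputable def PiS : PowerSeries (Rio K) :=
  PowerSeries.mk fun n => if n = 0 then 0 else if n = 1 then 1 else rioPi K (n - 1)

/-- The series `Y(x) = 1 + Σ_{n≥1} y_n x^n`. -/
noncomputable def YS : PowerSeries (Rio K) :=
  PowerSeries.mk fun n => if n = 0 then 1 else rioY K n

/-- `π_n` for `n ≥ 0` with the convention `π₀ = 1`. -/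
noncomputable def rioPi' (n : ℕ) : Rio K := if n = 0 then 1 else rioPi K n

/-- `y_n` for `n ≥ 0` with the convention `y₀ = 1`. -/
noncomputable def rioY' (n : ℕ) : Rio K := if n = 0 then 1 else rioY K n

/-- The coproduct of the Riordan Hopf algebra, determined on the generators by
`Δ π_n = Σ_{k=0}^n ([x^{n+1}] Π(x)^{k+1}) ⊗ π_k` and
`Δ y_n = Σ_{j=0}^n ([x^n] Y(x) Π(x)^j) ⊗ y_j`. -/
noncomputable def comulRio : Rio K →ₐ[K] Rio K ⊗[K] Rio K :=
  MvPolynomial.aeval fun v =>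
    match v with
    | Sum.inl m =>
        ∑ k ∈ Finset.range (m + 2),
          (PowerSeries.coeff (m + 2) ((PiS K) ^ (k + 1))) ⊗ₜ[K] rioPi' K k
    | Sum.inr m =>
        ∑ j ∈ Finset.range (m + 2),
          (PowerSeries.coeff (m + 1) (YS K * (PiS K) ^ j)) ⊗ₜ[K] rioY' K j

/-- The counit of the Riordan Hopf algebra. -/
noncomputable def counitRio : Rio K →ₐ[K] K := MvPolynomial.aeval fun _ => 0

/-- The subalgebra `FdB ⊂ Rio` generated by the `π`'s: a copy of the Faà di Bruno Hopf
algebra. -/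
noncomputable def fdbInRio : Subalgebra K (Rio K) :=
  Algebra.adjoin K (Set.range fun m : ℕ => (MvPolynomial.X (Sum.inl m) : Rio K))

/-- The subalgebra `FdB^{(n)} ⊆ Rio` generated by `π₁, …, π_{n-1}`. -/
noncomputable def fdbN (n : ℕ) : Subalgebra K (Rio K) :=
  Algebra.adjoin K ((fun m : ℕ => (MvPolynomial.X (Sum.inl m) : Rio K)) ''
    {m | m + 2 ≤ n})

/-- The subalgebra `Rio^{(n)} ⊆ Rio` generated by `π₁, …, π_{n-1}, y₁, …, y_n`. -/
noncomputable def rioN (n : ℕ) : Subalgebra K (Rio K) :=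
  Algebra.adjoin K
    (((fun m : ℕ => (MvPolynomial.X (Sum.inl m) : Rio K)) '' {m | m + 2 ≤ n}) ∪
     ((fun m : ℕ => (MvPolynomial.X (Sum.inr m) : Rio K)) '' {m | m + 1 ≤ n}))

/-- `φ : Rio → A` is a bialgebra morphism when restricted to the subalgebra `S`
(with respect to a coproduct `Δ_A` and counit `ε_A` on `A`). -/
def IsBialgHomOn {A : Type} [CommRing A] [Algebra K A]
    (ΔA : A →ₗ[K] A ⊗[K] A) (εA : A →ₗ[K] K) (φ : Rio K →ₐ[K] A)
    (S : Subalgebra K (Rio K)) : Prop :=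
  ∀ z ∈ S, ΔA (φ z) = (TensorProduct.map φ.toLinearMap φ.toLinearMap) (comulRio K z) ∧
    εA (φ z) = counitRio K z

/-- The Faà di Bruno Hopf algebra `K[π₁, π₂, …]`; variable `m` represents `π_{m+1}`. -/
abbrev FdB : Type := MvPolynomial ℕ K

/-- The generator `π_n` (`n ≥ 1`) of `FdB`. -/
noncomputable def fdbPi (n : ℕ) : FdB K := MvPolynomial.X (n - 1)

/-- `π_n` for `n ≥ 0` with the convention `π₀ = 1`. -/
noncomputable def fdbPi' (n : ℕ) : FdB K := if n = 0 then 1 else fdbPi K n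

/-- The series `Π(x) = x + Σ_{n≥1} π_n x^{n+1}` of the Faà di Bruno Hopf algebra. -/
noncomputable def fdbPiS : PowerSeries (FdB K) :=
  PowerSeries.mk fun n => if n = 0 then 0 else if n = 1 then 1 else fdbPi K (n - 1)

/-- The coproduct of the Faà di Bruno Hopf algebra:
`Δ π_n = Σ_{k=0}^n ([x^{n+1}] Π(x)^{k+1}) ⊗ π_k`. -/
noncomputable def comulFdB : FdB K →ₐ[K] FdB K ⊗[K] FdB K :=
  MvPolynomial.aeval fun m =>
    ∑ k ∈ Finset.range (m + 2),
      (PowerSeries.coeff (m + 2) ((fdbPiS K) ^ (k + 1))) ⊗ₜ[K] fdbPi' K k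

/-- The counit of the Faà di Bruno Hopf algebra. -/
noncomputable def counitFdB : FdB K →ₐ[K] K := MvPolynomial.aeval fun _ => 0

end CK
namespace CK

open scoped TensorProduct

section TPow

variable (K : Type) [Field K] [CharZero K]
variable (E : Type) [Fintype E] [DecidableEq E]
variable (A : Type) [CommRing A] [Algebra K A]

/-- The inclusion of the `e`-th factor `A → A^{⊗E}`. -/
noncomputable def tpowInclude (e : E) : A →ₗ[K] (⨂[K] _ : E, A) where
  toFun a := PiTensorProduct.tprod K (Function.update (fun _ => (1 : A)) e a)
  map_add' x y := by
    simpa using MultilinearMap.map_update_add (PiTensorProduct.tprod K)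
      (fun _ => (1 : A)) e x y
  map_smul' c x := by
    simpa using MultilinearMap.map_update_smul (PiTensorProduct.tprod K)
      (fun _ => (1 : A)) e c x

/-- The canonical left coaction of a bialgebra `A` on its tensor power `A^{⊗E}`, obtained
by applying the coproduct to every factor and multiplying the left tensor legs. -/
noncomputable def tpowCoaction (ΔA : A →ₗ[K] A ⊗[K] A) :
    (⨂[K] _ : E, A) →ₗ[K] A ⊗[K] (⨂[K] _ : E, A) :=
  (PiTensorProduct.lift
    ((MultilinearMap.mkPiAlgebra K E (A ⊗[K] (⨂[K] _ : E, A))).compLinearMap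
      fun e => TensorProduct.map LinearMap.id (tpowInclude K E A e))) ∘ₗ
  (PiTensorProduct.map fun _ => ΔA)

/-- A multilinear map `Λ : A^{⊗E} → A` is a 1-cocycle if (the induced map on the tensor
power satisfies) `Δ ∘ Λ = Λ ⊗ 1 + (id ⊗ Λ) ∘ δ`. -/
def IsCocycleTPow (ΔA : A →ₗ[K] A ⊗[K] A)
    (Λ : MultilinearMap K (fun _ : E => A) A) : Prop :=
  ∀ z : ⨂[K] _ : E, A,
    ΔA (PiTensorProduct.lift Λ z) =
      (PiTensorProduct.lift Λ z) ⊗ₜ[K] 1 +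
      (TensorProduct.map LinearMap.id (PiTensorProduct.lift Λ)) (tpowCoaction K E A ΔA z)

end TPow

end CK
namespace CK

set_option linter.unusedSectionVars false
set_option linter.unnecessarySimpa false

open PowerSeries

section AuxBinom

variable (K : Type) [Field K] [CharZero K]
variable {A : Type} [CommRing A] [Algebra K A]

lemma coeff_binomPow (u : K) (F : PowerSeries A) (n : ℕ) :
    PowerSeries.coeff n (binomPow u F) =
      ∑ m ∈ Finset.range (n + 1), binomC K u m • PowerSeries.coeff n ((F - 1) ^ m) := by
  simp [binomPow]

lemma coeff_pow_eq_zero {R : Type} [CommRing R] {S : PowerSeries R}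
    (hS : PowerSeries.constantCoeff S = 0)
    {j n : ℕ} (h : n < j) : PowerSeries.coeff n (S ^ j) = 0 :=
  PowerSeries.X_pow_dvd_iff.mp
    (pow_dvd_pow_of_dvd (PowerSeries.X_dvd_iff.mpr hS) j) n h

lemma ffall_eq_eval (u : K) (m : ℕ) :
    ffall K u m = (descPochhammer K m).eval u := by
  induction m with
  | zero => simp [ffall]
  | succ m ih =>
      rw [ffall, Finset.prod_range_succ, ← ffall, ih, descPochhammer_succ_right]
      simp

lemma binomC_natCast (N m : ℕ) : binomC K (N : K) m = (N.choose m : K) := by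
  have h1 : ffall K (N : K) m = (N.descFactorial m : K) := by
    rw [ffall_eq_eval]
    exact_mod_cast descPochhammer_eval_eq_descFactorial K N m
  rw [binomC, h1, Nat.descFactorial_eq_factorial_mul_choose]
  push_cast
  rw [mul_comm, mul_div_assoc, div_self (by exact_mod_cast m.factorial_ne_zero), mul_one]

lemma binomPow_natCast (N : ℕ) (F : PowerSeries A) (hF : PowerSeries.constantCoeff F = 1) :
    binomPow ((N : K)) F = F ^ N := by
  have hF1 : PowerSeries.constantCoeff (F - 1) = 0 := by simp [hF]
  ext n
  rw [coeff_binomPow K]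
  have hFN : F ^ N =
      ∑ m ∈ Finset.range (N + 1), (F - 1) ^ m * ((N.choose m : ℕ) : PowerSeries A) := by
    conv_lhs => rw [← sub_add_cancel F 1, add_pow]
    simp
  rw [hFN, map_sum]
  have key : ∀ m : ℕ,
      binomC K (N : K) m • PowerSeries.coeff n ((F - 1) ^ m) =
      PowerSeries.coeff n ((F - 1) ^ m * ((N.choose m : ℕ) : PowerSeries A)) := by
    intro m
    rw [← map_natCast (PowerSeries.C) (N.choose m), PowerSeries.coeff_mul_C,
      binomC_natCast, Algebra.smul_def, map_natCast, mul_comm]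
  set M := max n N with hM
  have e1 : ∑ m ∈ Finset.range (n + 1), binomC K (N : K) m • PowerSeries.coeff n ((F - 1) ^ m)
      = ∑ m ∈ Finset.range (M + 1), binomC K (N : K) m • PowerSeries.coeff n ((F - 1) ^ m) := by
    refine Finset.sum_subset (Finset.range_subset_range.mpr (by omega)) ?_
    intro m hm1 hm2
    simp only [Finset.mem_range] at hm1 hm2
    rw [coeff_pow_eq_zero hF1 (by omega), smul_zero]
  have e2 : ∑ m ∈ Finset.range (N + 1),
        PowerSeries.coeff n ((F - 1) ^ m * ((N.choose m : ℕ) : PowerSeries A))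
      = ∑ m ∈ Finset.range (M + 1),
        PowerSeries.coeff n ((F - 1) ^ m * ((N.choose m : ℕ) : PowerSeries A)) := by
    refine Finset.sum_subset (Finset.range_subset_range.mpr (by omega)) ?_
    intro m hm1 hm2
    simp only [Finset.mem_range] at hm1 hm2
    rw [Nat.choose_eq_zero_of_lt (by omega)]
    simp
  rw [e1, e2]
  exact Finset.sum_congr rfl fun m _ => key m

lemma poly_nat_zero (p : Polynomial K) (h : ∀ N : ℕ, p.eval (N : K) = 0) : p = 0 :=
  p.eq_zero_of_infinite_isRoot
    (Set.infinite_of_injective_forall_mem (f := fun N : ℕ => (N : K))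
      Nat.cast_injective (fun N => h N))

lemma polyA_nat_zero (q : Polynomial A)
    (h : ∀ N : ℕ, q.eval (algebraMap K A (N : K)) = 0) : q = 0 := by
  by_contra hq
  obtain ⟨i, hi⟩ : ∃ i, q.coeff i ≠ 0 := by
    by_contra h'
    push_neg at h'
    exact hq (Polynomial.ext fun i => by simp [h' i])
  obtain ⟨f, hf⟩ : ∃ f : Module.Dual K A, f (q.coeff i) ≠ 0 := by
    by_contra h'
    push_neg at h'
    exact hi ((Module.forall_dual_apply_eq_zero_iff K _).mp h')
  set n := q.natDegree + 1 with hn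
  set pf : Polynomial K :=
    ∑ j ∈ Finset.range n, Polynomial.C (f (q.coeff j)) * Polynomial.X ^ j with hpf
  have hev : ∀ u : K, pf.eval u = f (q.eval (algebraMap K A u)) := by
    intro u
    rw [Polynomial.eval_eq_sum_range (x := algebraMap K A u)]
    have : ∀ j : ℕ, q.coeff j * (algebraMap K A u) ^ j = (u ^ j) • q.coeff j := by
      intro j
      rw [Algebra.smul_def, map_pow, mul_comm]
    simp only [this]
    rw [map_sum]
    simp only [map_smul, smul_eq_mul]
    rw [hpf]
    rw [Polynomial.eval_finset_sum]
    refine Finset.sum_congr rfl fun j _ => ?_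
    rw [Polynomial.eval_mul, Polynomial.eval_C, Polynomial.eval_pow, Polynomial.eval_X, mul_comm]
  have hpf0 : pf = 0 := by
    refine poly_nat_zero K pf fun N => ?_
    rw [hev, h N, map_zero]
  have hilt : i < n := by
    have := Polynomial.le_natDegree_of_ne_zero hi
    omega
  have hco : pf.coeff i = f (q.coeff i) := by
    rw [hpf, Polynomial.finset_sum_coeff]
    rw [Finset.sum_eq_single i]
    · simp
    · intro j _ hj
      simp [Polynomial.coeff_X_pow, hj, Ne.symm hj]
    · intro hnot
      exact absurd (Finset.mem_range.mpr hilt) hnot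
  rw [hpf0, Polynomial.coeff_zero] at hco
  exact hf hco.symm

variable {K}

/-- A function `K → A` is polynomially representable. -/
def RepP (g : K → A) : Prop := ∃ q : Polynomial A, ∀ u : K, g u = q.eval (algebraMap K A u)

lemma RepP.const (a : A) : RepP (fun _ : K => a) :=
  ⟨Polynomial.C a, fun _ => (Polynomial.eval_C).symm⟩

lemma RepP.zero : RepP (fun _ : K => (0 : A)) := ⟨0, by simp⟩

lemma RepP.add {g h : K → A} (hg : RepP g) (hh : RepP h) : RepP (fun u => g u + h u) := by
  obtain ⟨q, hq⟩ := hg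
  obtain ⟨r, hr⟩ := hh
  exact ⟨q + r, fun u => by show g u + h u = _; rw [Polynomial.eval_add, hq, hr]⟩

lemma RepP.mul {g h : K → A} (hg : RepP g) (hh : RepP h) : RepP (fun u => g u * h u) := by
  obtain ⟨q, hq⟩ := hg
  obtain ⟨r, hr⟩ := hh
  exact ⟨q * r, fun u => by show g u * h u = _; rw [Polynomial.eval_mul, hq, hr]⟩

lemma RepP.sum {ι : Type*} {s : Finset ι} {g : ι → K → A} (h : ∀ i ∈ s, RepP (g i)) :
    RepP (fun u => ∑ i ∈ s, g i u) := by
  classical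
  induction s using Finset.induction_on with
  | empty => simpa using RepP.zero
  | insert a s' hx ih =>
      simp only [Finset.sum_insert hx]
      exact (h a (Finset.mem_insert_self a s')).add
        (ih fun i hi => h i (Finset.mem_insert_of_mem hi))

lemma RepP.algHomComp {B : Type} [CommRing B] [Algebra K B] (φ : A →ₐ[K] B)
    {g : K → A} (hg : RepP g) : RepP (fun u => φ (g u)) := by
  obtain ⟨q, hq⟩ := hg
  refine ⟨q.map φ.toRingHom, fun u => ?_⟩
  show φ (g u) = _
  rw [hq, Polynomial.eval_map]
  have hpt : algebraMap K B u = φ.toRingHom (algebraMap K A u) := (φ.commutes u).symm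
  rw [hpt, Polynomial.eval₂_at_apply]
  rfl

lemma RepP.coeff_binomPow (F : PowerSeries A) (n : ℕ) :
    RepP (fun u : K => PowerSeries.coeff n (binomPow u F)) := by
  refine ⟨∑ m ∈ Finset.range (n + 1),
      Polynomial.map (algebraMap K A)
        (descPochhammer K m * Polynomial.C ((m.factorial : K)⁻¹)) *
        Polynomial.C (PowerSeries.coeff n ((F - 1) ^ m)), fun u => ?_⟩
  show PowerSeries.coeff n (binomPow u F) = _
  rw [CK.coeff_binomPow K, Polynomial.eval_finset_sum]
  refine Finset.sum_congr rfl fun m _ => ?_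
  rw [Polynomial.eval_mul, Polynomial.eval_C, Polynomial.eval_map,
    Polynomial.eval₂_at_apply]
  have : (descPochhammer K m * Polynomial.C ((m.factorial : K)⁻¹)).eval u = binomC K u m := by
    rw [Polynomial.eval_mul, Polynomial.eval_C, ← ffall_eq_eval, binomC, div_eq_mul_inv]
  rw [this, Algebra.smul_def]

lemma RepP.eqOn {g h : K → A} (hg : RepP g) (hh : RepP h)
    (hN : ∀ N : ℕ, g (N : K) = h (N : K)) : ∀ u, g u = h u := by
  obtain ⟨q, hq⟩ := hg
  obtain ⟨r, hr⟩ := hh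
  have h0 : q - r = 0 := by
    refine polyA_nat_zero K _ fun N => ?_
    rw [Polynomial.eval_sub, ← hq, ← hr, hN, sub_self]
  intro u
  rw [hq, hr, ← sub_eq_zero, ← Polynomial.eval_sub, h0, Polynomial.eval_zero]

lemma RepP.coeff_binomPow_mul (F G : PowerSeries A) (n : ℕ) :
    RepP (fun u : K => PowerSeries.coeff n (binomPow u F * G)) := by
  have he : (fun u : K => PowerSeries.coeff n (binomPow u F * G)) =
      fun u => ∑ pq ∈ Finset.HasAntidiagonal.antidiagonal n,
        PowerSeries.coeff pq.1 (binomPow u F) * PowerSeries.coeff pq.2 G :=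
    funext fun u => PowerSeries.coeff_mul n _ _
  rw [he]
  exact RepP.sum fun pq _ => (RepP.coeff_binomPow F pq.1).mul (RepP.const _)

end AuxBinom

end CK
namespace CK

set_option linter.unusedSectionVars false

open PowerSeries

section SubstS

variable {R : Type} [CommRing R]

/-- Substitution of the series `S` (with zero constant term) into `B`. -/
noncomputable def substS (S B : PowerSeries R) : PowerSeries R :=
  PowerSeries.mk fun n => ∑ j ∈ Finset.range (n + 1),
    PowerSeries.coeff j B * PowerSeries.coeff n (S ^ j)

lemma coeff_substS (S B : PowerSeries R) (n : ℕ) :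
    PowerSeries.coeff n (substS S B) =
      ∑ j ∈ Finset.range (n + 1),
        PowerSeries.coeff j B * PowerSeries.coeff n (S ^ j) :=
  PowerSeries.coeff_mk _ _

lemma coeff_substS' {S : PowerSeries R} (hS : PowerSeries.constantCoeff S = 0)
    (B : PowerSeries R) (n : ℕ) {M : ℕ} (h : n < M) :
    PowerSeries.coeff n (substS S B) =
      ∑ j ∈ Finset.range M,
        PowerSeries.coeff j B * PowerSeries.coeff n (S ^ j) := by
  rw [coeff_substS]
  refine Finset.sum_subset (Finset.range_subset_range.mpr (by omega)) ?_
  intro j hj1 hj2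
  rw [Finset.mem_range, not_lt] at hj2
  rw [coeff_pow_eq_zero hS (by omega), mul_zero]

lemma substS_one (S : PowerSeries R) : substS S 1 = 1 := by
  ext n
  rw [coeff_substS, Finset.sum_eq_single 0]
  · simp
  · intro j _ hj
    simp [PowerSeries.coeff_one, hj]
  · intro h
    simp at h

lemma substS_mul {S : PowerSeries R} (hS : PowerSeries.constantCoeff S = 0)
    (A B : PowerSeries R) :
    substS S (A * B) = substS S A * substS S B := by
  classical
  ext n
  rw [coeff_substS, PowerSeries.coeff_mul]
  have hR : ∀ pq ∈ Finset.HasAntidiagonal.antidiagonal n,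
      PowerSeries.coeff pq.1 (substS S A) * PowerSeries.coeff pq.2 (substS S B) =
      ∑ a ∈ Finset.range (n + 1), ∑ b ∈ Finset.range (n + 1),
        PowerSeries.coeff a A * PowerSeries.coeff b B *
          (PowerSeries.coeff pq.1 (S ^ a) * PowerSeries.coeff pq.2 (S ^ b)) := by
    intro pq hpq
    rw [Finset.HasAntidiagonal.mem_antidiagonal] at hpq
    rw [coeff_substS' hS A pq.1 (show pq.1 < n + 1 by omega),
        coeff_substS' hS B pq.2 (show pq.2 < n + 1 by omega),
        Finset.sum_mul_sum]
    exact Finset.sum_congr rfl fun a _ => Finset.sum_congr rfl fun b _ => by ring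
  rw [Finset.sum_congr rfl hR]
  -- RHS to double sum
  have hRHS : ∑ pq ∈ Finset.HasAntidiagonal.antidiagonal n, ∑ a ∈ Finset.range (n + 1),
        ∑ b ∈ Finset.range (n + 1),
        PowerSeries.coeff a A * PowerSeries.coeff b B *
          (PowerSeries.coeff pq.1 (S ^ a) * PowerSeries.coeff pq.2 (S ^ b)) =
      ∑ a ∈ Finset.range (n + 1), ∑ b ∈ Finset.range (n + 1),
        PowerSeries.coeff a A * PowerSeries.coeff b B *
          PowerSeries.coeff n (S ^ (a + b)) := by
    rw [Finset.sum_comm]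
    refine Finset.sum_congr rfl fun a _ => ?_
    rw [Finset.sum_comm]
    refine Finset.sum_congr rfl fun b _ => ?_
    rw [← Finset.mul_sum, ← PowerSeries.coeff_mul, ← pow_add]
  rw [hRHS]
  -- LHS to double sum
  have e1 : ∀ j ∈ Finset.range (n + 1),
      PowerSeries.coeff j (A * B) * PowerSeries.coeff n (S ^ j) =
      ∑ x ∈ Finset.HasAntidiagonal.antidiagonal j,
        PowerSeries.coeff x.1 A * PowerSeries.coeff x.2 B *
          PowerSeries.coeff n (S ^ (x.1 + x.2)) := by
    intro j _
    rw [PowerSeries.coeff_mul, Finset.sum_mul]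
    refine Finset.sum_congr rfl fun x hx => ?_
    rw [Finset.HasAntidiagonal.mem_antidiagonal] at hx
    rw [hx]
  rw [Finset.sum_congr rfl e1]
  have hdisj : (↑(Finset.range (n + 1)) : Set ℕ).PairwiseDisjoint Finset.HasAntidiagonal.antidiagonal := by
    intro i _ j _ hij
    refine Finset.disjoint_left.mpr fun x hxi hxj => ?_
    rw [Finset.HasAntidiagonal.mem_antidiagonal] at hxi hxj
    exact hij (hxi ▸ hxj)
  rw [← Finset.sum_biUnion hdisj]
  have hsub : (Finset.range (n + 1)).biUnion Finset.HasAntidiagonal.antidiagonal ⊆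
      Finset.range (n + 1) ×ˢ Finset.range (n + 1) := by
    intro x hx
    simp only [Finset.mem_biUnion, Finset.HasAntidiagonal.mem_antidiagonal, Finset.mem_range,
      Finset.mem_product] at hx ⊢
    obtain ⟨j, hj, hxj⟩ := hx
    omega
  have hzero : ∀ x ∈ Finset.range (n + 1) ×ˢ Finset.range (n + 1),
      x ∉ (Finset.range (n + 1)).biUnion Finset.HasAntidiagonal.antidiagonal →
      PowerSeries.coeff x.1 A * PowerSeries.coeff x.2 B *
        PowerSeries.coeff n (S ^ (x.1 + x.2)) = 0 := by
    intro x _ hx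
    simp only [Finset.mem_biUnion, Finset.HasAntidiagonal.mem_antidiagonal, Finset.mem_range] at hx
    push_neg at hx
    have hgt : n < x.1 + x.2 := by
      by_contra hle
      exact absurd rfl (hx (x.1 + x.2) (by omega))
    rw [coeff_pow_eq_zero hS hgt, mul_zero]
  rw [Finset.sum_subset hsub hzero, Finset.sum_product]

lemma substS_pow {S : PowerSeries R} (hS : PowerSeries.constantCoeff S = 0)
    (B : PowerSeries R) (m : ℕ) :
    substS S (B ^ m) = (substS S B) ^ m := by
  induction m with
  | zero => simpa using substS_one S
  | succ m ih => rw [pow_succ, pow_succ, substS_mul hS, ih]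

end SubstS

end CK
namespace CK

set_option linter.unusedSectionVars false

open PowerSeries
open scoped TensorProduct

section RioAux

variable (K : Type) [Field K] [CharZero K]

/-- Left inclusion `Rio → Rio ⊗ Rio`. -/
noncomputable def ii1 : Rio K →ₐ[K] Rio K ⊗[K] Rio K := Algebra.TensorProduct.includeLeft

/-- Right inclusion `Rio → Rio ⊗ Rio`. -/
noncomputable def ii2 : Rio K →ₐ[K] Rio K ⊗[K] Rio K := Algebra.TensorProduct.includeRight

lemma ii1_mul_ii2 (a b : Rio K) : ii1 K a * ii2 K b = a ⊗ₜ[K] b := by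
  simp [ii1, ii2, Algebra.TensorProduct.tmul_mul_tmul]

lemma constantCoeff_PiS : PowerSeries.constantCoeff (PiS K) = 0 := by
  simp [PiS, PowerSeries.constantCoeff_mk]

lemma constantCoeff_YS : PowerSeries.constantCoeff (YS K) = 1 := by
  simp [YS, PowerSeries.constantCoeff_mk]

lemma constantCoeff_map_PiS :
    PowerSeries.constantCoeff (PowerSeries.map (ii1 K).toRingHom (PiS K)) = 0 := by
  rw [← PowerSeries.coeff_zero_eq_constantCoeff_apply, PowerSeries.coeff_map,
    PowerSeries.coeff_zero_eq_constantCoeff_apply, constantCoeff_PiS, map_zero]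

lemma coeff_mul_substS_tmul (W B : PowerSeries (Rio K)) (n : ℕ) :
    PowerSeries.coeff n (PowerSeries.map (ii1 K).toRingHom W *
      substS (PowerSeries.map (ii1 K).toRingHom (PiS K))
        (PowerSeries.map (ii2 K).toRingHom B)) =
    ∑ j ∈ Finset.range (n + 1),
      (PowerSeries.coeff n (W * (PiS K) ^ j)) ⊗ₜ[K] (PowerSeries.coeff j B) := by
  rw [PowerSeries.coeff_mul]
  have step1 : ∀ pq ∈ Finset.HasAntidiagonal.antidiagonal n,
      PowerSeries.coeff pq.1 (PowerSeries.map (ii1 K).toRingHom W) *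
        PowerSeries.coeff pq.2 (substS (PowerSeries.map (ii1 K).toRingHom (PiS K))
          (PowerSeries.map (ii2 K).toRingHom B)) =
      ∑ j ∈ Finset.range (n + 1),
        ii1 K (PowerSeries.coeff pq.1 W * PowerSeries.coeff pq.2 ((PiS K) ^ j)) *
          ii2 K (PowerSeries.coeff j B) := by
    intro pq hpq
    rw [Finset.HasAntidiagonal.mem_antidiagonal] at hpq
    rw [PowerSeries.coeff_map,
      coeff_substS' (constantCoeff_map_PiS K) _ pq.2 (show pq.2 < n + 1 by omega),
      Finset.mul_sum]
    refine Finset.sum_congr rfl fun j _ => ?_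
    rw [← map_pow, PowerSeries.coeff_map, PowerSeries.coeff_map, map_mul]
    try simp only [AlgHom.toRingHom_eq_coe, AlgHom.coe_toRingHom, RingHom.coe_coe]
    ring
  rw [Finset.sum_congr rfl step1, Finset.sum_comm]
  refine Finset.sum_congr rfl fun j _ => ?_
  rw [← Finset.sum_mul, ← map_sum (ii1 K), ← PowerSeries.coeff_mul, ii1_mul_ii2]

lemma coeff_PiS_succ (i : ℕ) :
    PowerSeries.coeff (i + 1) (PiS K) = rioPi' K i := by
  match i with
  | 0 => simp [PiS, rioPi']
  | (i + 1) => simp [PiS, rioPi', rioPi]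

lemma coeff_YS (j : ℕ) : PowerSeries.coeff j (YS K) = rioY' K j := by
  match j with
  | 0 => simp [YS, rioY']
  | (j + 1) => simp [YS, rioY', rioY]

lemma comul_coeff_PiS (n : ℕ) :
    comulRio K (PowerSeries.coeff n (PiS K)) =
      ∑ j ∈ Finset.range (n + 1),
        (PowerSeries.coeff n ((PiS K) ^ j)) ⊗ₜ[K] (PowerSeries.coeff j (PiS K)) := by
  match n with
  | 0 =>
    have h0 : PowerSeries.coeff 0 (PiS K) = 0 := by simp [PiS]
    rw [h0, map_zero, Finset.sum_range_one, h0, TensorProduct.tmul_zero]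
  | 1 =>
    have h1 : PowerSeries.coeff 1 (PiS K) = 1 := by simp [PiS]
    rw [h1, map_one, Finset.sum_range_succ, Finset.sum_range_one, pow_zero, pow_one, h1]
    have hz : PowerSeries.coeff 1 (1 : PowerSeries (Rio K)) = 0 := by
      simp [PowerSeries.coeff_one]
    rw [hz, TensorProduct.zero_tmul, zero_add, Algebra.TensorProduct.one_def]
  | (m + 2) =>
    have hc : PowerSeries.coeff (m + 2) (PiS K) = MvPolynomial.X (Sum.inl m) := by
      simp [PiS, rioPi]
    rw [hc]
    have hΔ : comulRio K (MvPolynomial.X (Sum.inl m)) =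
        ∑ k ∈ Finset.range (m + 2),
          (PowerSeries.coeff (m + 2) ((PiS K) ^ (k + 1))) ⊗ₜ[K] rioPi' K k := by
      simp [comulRio]
    rw [hΔ]
    conv_rhs => rw [Finset.sum_range_succ']
    have hz : (PowerSeries.coeff (m + 2)) ((PiS K) ^ 0) = 0 := by
      rw [pow_zero, PowerSeries.coeff_one]
      simp
    rw [hz, TensorProduct.zero_tmul, add_zero]
    exact Finset.sum_congr rfl fun i _ => by rw [coeff_PiS_succ]

lemma comul_coeff_YS (n : ℕ) :
    comulRio K (PowerSeries.coeff n (YS K)) =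
      ∑ j ∈ Finset.range (n + 1),
        (PowerSeries.coeff n (YS K * (PiS K) ^ j)) ⊗ₜ[K] (PowerSeries.coeff j (YS K)) := by
  match n with
  | 0 =>
    have h0 : PowerSeries.coeff 0 (YS K) = 1 := by simp [YS]
    rw [h0, map_one, Finset.sum_range_one, pow_zero, mul_one, h0]
    simp [Algebra.TensorProduct.one_def]
  | (m + 1) =>
    have hc : PowerSeries.coeff (m + 1) (YS K) = MvPolynomial.X (Sum.inr m) := by
      simp [YS, rioY]
    rw [hc]
    have hΔ : comulRio K (MvPolynomial.X (Sum.inr m)) =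
        ∑ j ∈ Finset.range (m + 2),
          (PowerSeries.coeff (m + 1) (YS K * (PiS K) ^ j)) ⊗ₜ[K] rioY' K j := by
      simp [comulRio]
    rw [hΔ]
    exact Finset.sum_congr rfl fun j _ => by rw [coeff_YS]

lemma map_comul_PiS :
    PowerSeries.map (comulRio K).toRingHom (PiS K) =
      substS (PowerSeries.map (ii1 K).toRingHom (PiS K))
        (PowerSeries.map (ii2 K).toRingHom (PiS K)) := by
  ext n
  rw [PowerSeries.coeff_map]
  show comulRio K (PowerSeries.coeff n (PiS K)) = _
  rw [comul_coeff_PiS, coeff_substS]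
  refine Finset.sum_congr rfl fun j _ => ?_
  rw [← map_pow, PowerSeries.coeff_map, PowerSeries.coeff_map]
  try simp only [AlgHom.toRingHom_eq_coe, AlgHom.coe_toRingHom, RingHom.coe_coe]
  rw [mul_comm, ii1_mul_ii2]

lemma map_comul_YS :
    PowerSeries.map (comulRio K).toRingHom (YS K) =
      PowerSeries.map (ii1 K).toRingHom (YS K) *
        substS (PowerSeries.map (ii1 K).toRingHom (PiS K))
          (PowerSeries.map (ii2 K).toRingHom (YS K)) := by
  ext n
  rw [PowerSeries.coeff_map]
  show comulRio K (PowerSeries.coeff n (YS K)) = _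
  rw [comul_coeff_YS, coeff_mul_substS_tmul]

lemma comul_coeff_nat (N k n : ℕ) :
    comulRio K (PowerSeries.coeff n ((YS K) ^ N * (PiS K) ^ k)) =
    ∑ j ∈ Finset.range (n + 1),
      (PowerSeries.coeff n ((YS K) ^ N * (PiS K) ^ j)) ⊗ₜ[K]
        (PowerSeries.coeff j ((YS K) ^ N * (PiS K) ^ k)) := by
  have hS0 := constantCoeff_map_PiS K
  have e1 : comulRio K (PowerSeries.coeff n ((YS K) ^ N * (PiS K) ^ k)) =
      PowerSeries.coeff n (PowerSeries.map (comulRio K).toRingHom ((YS K) ^ N * (PiS K) ^ k)) := by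
    rw [PowerSeries.coeff_map]
    rfl
  rw [e1]
  have e2 : PowerSeries.map (comulRio K).toRingHom ((YS K) ^ N * (PiS K) ^ k) =
      PowerSeries.map (ii1 K).toRingHom ((YS K) ^ N) *
        substS (PowerSeries.map (ii1 K).toRingHom (PiS K))
          (PowerSeries.map (ii2 K).toRingHom ((YS K) ^ N * (PiS K) ^ k)) := by
    rw [map_mul, map_pow, map_pow, map_comul_YS, map_comul_PiS]
    rw [mul_pow, ← substS_pow hS0, ← substS_pow hS0, mul_assoc, ← substS_mul hS0]
    rw [map_mul, map_pow, map_pow, map_pow]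
  rw [e2, coeff_mul_substS_tmul]

end RioAux

end CK
namespace CK

open scoped TensorProduct

/-- In the Riordan Hopf algebra, for any `s ∈ K` and `k ∈ ℤ_{≥0}`,
applying the coproduct coefficientwise:
`Δ(Y(x)^s Π(x)^k) = Σ_{j≥0} Y(x)^s Π(x)^j ⊗ [x^j](Y(x)^s Π(x)^k)`. -/
theorem statement_15 (K : Type) [Field K] [CharZero K] (s : K) (k : ℕ) :
    lapp (comulRio K).toLinearMap (binomPow s (YS K) * (PiS K) ^ k) =
      PowerSeries.mk fun n =>
        ∑ j ∈ Finset.range (n + 1),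
          (PowerSeries.coeff n (binomPow s (YS K) * (PiS K) ^ j)) ⊗ₜ[K]
            (PowerSeries.coeff j (binomPow s (YS K) * (PiS K) ^ k)) := by
  ext n
  simp only [lapp, PowerSeries.coeff_mk, AlgHom.toLinearMap_apply]
  refine RepP.eqOn
    (g := fun u : K => comulRio K (PowerSeries.coeff n (binomPow u (YS K) * (PiS K) ^ k)))
    (h := fun u : K => ∑ j ∈ Finset.range (n + 1),
      (PowerSeries.coeff n (binomPow u (YS K) * (PiS K) ^ j)) ⊗ₜ[K]
        (PowerSeries.coeff j (binomPow u (YS K) * (PiS K) ^ k)))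
    ?_ ?_ ?_ s
  · exact RepP.algHomComp (comulRio K) (RepP.coeff_binomPow_mul (YS K) ((PiS K) ^ k) n)
  · have he : (fun u : K => ∑ j ∈ Finset.range (n + 1),
        (PowerSeries.coeff n (binomPow u (YS K) * (PiS K) ^ j)) ⊗ₜ[K]
          (PowerSeries.coeff j (binomPow u (YS K) * (PiS K) ^ k)))
        = fun u : K => ∑ j ∈ Finset.range (n + 1),
            ii1 K (PowerSeries.coeff n (binomPow u (YS K) * (PiS K) ^ j)) *
              ii2 K (PowerSeries.coeff j (binomPow u (YS K) * (PiS K) ^ k)) :=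
      funext fun u => Finset.sum_congr rfl fun j _ => (ii1_mul_ii2 K _ _).symm
    rw [he]
    exact RepP.sum fun j _ =>
      (RepP.algHomComp (ii1 K) (RepP.coeff_binomPow_mul (YS K) ((PiS K) ^ j) n)).mul
        (RepP.algHomComp (ii2 K) (RepP.coeff_binomPow_mul (YS K) ((PiS K) ^ k) j))
  · intro N
    rw [binomPow_natCast K N (YS K) (constantCoeff_YS K)]
    exact comul_coeff_nat K N k n

end CK
end

section
/- Let t be a finite rooted tree with more than one vertex. There is a bijection between binary tubings τ of t and triples (t', τ', τ''), where t' is a proper subtree of t (a principal downset different from t), τ' ∈ Tub(t'), and τ'' ∈ Tub(t∖t'). Moreover, under this bijection: rk(τ,v) = rk(τ',v) for v ∈ t'; rk(τ, rt t) = rk(τ'', rt t) + 1; rk(τ,v) = rk(τ'',v) for all other v ∈ t∖t'; and b(τ) = b(τ'') + 1. -/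
open scoped TensorProduct

namespace CK

variable {I : Type} {E : I → Type}

open scoped Classical in
/-- The number of children of `v` joined to `v` by an edge decorated `e` and whose own
decoration lies in the block of the partition indexed by `j` (`cl` is the partition
map). -/
noncomputable def odCount {J : Type} (cl : I → J) (t : PreTree I E)
    (v : List ℕ) (e : E (t.vdec v)) (j : J) : ℕ :=
  ((childrenAt t v).filter fun c =>
    t.edec c = some ⟨t.vdec v, e⟩ ∧ cl (t.vdec c) = j).card

variable (K : Type) [Field K] [CharZero K]

/-- Coefficientwise application of the grafting operator `B̃₊^{(i)}` (as a multilinear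
map on the `E i`-th tensor power) to a tuple of power series. -/
noncomputable def BappS (i : I) [Fintype (E i)]
    (S : E i → PowerSeries (HCK K I E)) : PowerSeries (HCK K I E) :=
  PowerSeries.mk fun m =>
    ∑ᶠ d : E i → ℕ, if (∑ e : E i, d e) = m then
      Bapp K i (fun e => PowerSeries.coeff (d e) (S e)) else 0

end CK
namespace CK

open scoped TensorProduct

section TubingLemmas
open scoped Classical

variable {I : Type} {E : I → Type}

/-- `r` is the root of the set `S`: it belongs to `S` and prefixes every element. -/
def HasRoot (S : Finset (List ℕ)) (r : List ℕ) : Prop := r ∈ S ∧ ∀ v ∈ S, r <+: v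

theorem HasRoot.unique {S : Finset (List ℕ)} {r r' : List ℕ}
    (h : HasRoot S r) (h' : HasRoot S r') : r = r' :=
  (h.2 _ h'.1).eq_of_length_le (h'.2 _ h.1).length_le

theorem tubeRoot_eq {S : Finset (List ℕ)} {r : List ℕ} (h : HasRoot S r) :
    tubeRoot S = r := by
  have hne : S.val.toList ≠ [] := by
    simp only [ne_eq, Multiset.toList_eq_nil, Finset.val_eq_zero]
    exact Finset.nonempty_iff_ne_empty.mp ⟨r, h.1⟩
  have h2 : S.val.toList.argmin List.length ≠ none := fun hn =>
    hne (List.argmin_eq_none.mp hn)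
  obtain ⟨m, hm⟩ := Option.ne_none_iff_exists'.mp h2
  have hmem : m ∈ S := by
    have := List.argmin_mem hm
    rwa [Multiset.mem_toList, ← Finset.mem_def] at this
  have hrl : r ∈ S.val.toList := by rw [Multiset.mem_toList, ← Finset.mem_def]; exact h.1
  have hle : m.length ≤ r.length := List.le_of_mem_argmin hrl hm
  have : r = m := (h.2 _ hmem).eq_of_length_le hle
  simp [tubeRoot, hm, ← this]

theorem IsTube.nonempty {t : PreTree I E} {S : Finset (List ℕ)} (h : IsTube t S) :
    S.Nonempty := h.1

theorem IsTube.subset_supp {t : PreTree I E} {S : Finset (List ℕ)} (h : IsTube t S) :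
    S ⊆ t.supp := h.2.1

theorem IsTube.hasRoot {t : PreTree I E} {S : Finset (List ℕ)} (h : IsTube t S) :
    HasRoot S (tubeRoot S) := by
  obtain ⟨-, -, r, hr, hpre, -⟩ := h
  have : tubeRoot S = r := tubeRoot_eq ⟨hr, hpre⟩
  rw [this]; exact ⟨hr, hpre⟩

theorem IsTube.root_mem {t : PreTree I E} {S : Finset (List ℕ)} (h : IsTube t S) :
    tubeRoot S ∈ S := h.hasRoot.1

theorem IsTube.root_prefix {t : PreTree I E} {S : Finset (List ℕ)} (h : IsTube t S)
    {v : List ℕ} (hv : v ∈ S) : tubeRoot S <+: v := h.hasRoot.2 v hv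

theorem IsTube.convex {t : PreTree I E} {S : Finset (List ℕ)} (h : IsTube t S) :
    ∀ v ∈ S, ∀ w : List ℕ, tubeRoot S <+: w → w <+: v → w ∈ S := by
  obtain ⟨-, -, r, hr, hpre, hconv⟩ := h
  have : tubeRoot S = r := tubeRoot_eq ⟨hr, hpre⟩
  rw [this]; exact hconv

/-- IsTube only depends on the support. -/
theorem isTube_congr {t s : PreTree I E} (h : t.supp = s.supp) {S : Finset (List ℕ)} :
    IsTube t S ↔ IsTube s S := by unfold IsTube; rw [h]

theorem mem_of_compat {t : PreTree I E} {τ : Finset (Finset (List ℕ))}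
    (hτ : IsBinaryTubing t τ) {S : Finset (List ℕ)} (hS : IsTube t S)
    (hc : ∀ T ∈ τ, S ⊆ T ∨ T ⊆ S ∨ Disjoint S T) : S ∈ τ := by
  have h := hτ.2.2 (insert S τ) (Finset.subset_insert _ _) ?_ ?_
  · rw [← h]; exact Finset.mem_insert_self _ _
  · intro T hT
    rcases Finset.mem_insert.mp hT with rfl | hT
    · exact hS
    · exact hτ.1 T hT
  · intro A hA B hB
    rw [Finset.mem_insert] at hA hB
    rcases hA with rfl | hA
    · rcases hB with rfl | hB
      · exact Or.inl subset_rfl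
      · rcases hc B hB with h1 | h1 | h1
        · exact Or.inl h1
        · exact Or.inr (Or.inl h1)
        · exact Or.inr (Or.inr h1)
    · rcases hB with rfl | hB
      · rcases hc A hA with h1 | h1 | h1
        · exact Or.inr (Or.inl h1)
        · exact Or.inl h1
        · exact Or.inr (Or.inr h1.symm)
      · exact hτ.2.1 A hA B hB

theorem isTube_supp {t : PreTree I E} (ht : t.WF) : IsTube t t.supp := by
  refine ⟨⟨[], ht.1⟩, subset_rfl, [], ht.1, fun v _ => List.nil_prefix, ?_⟩
  intro v hv w _ hw
  exact ht.2.1 v hv w hw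

theorem supp_mem {t : PreTree I E} (ht : t.WF) {τ : Finset (Finset (List ℕ))}
    (hτ : IsBinaryTubing t τ) : t.supp ∈ τ := by
  refine mem_of_compat hτ (isTube_supp ht) fun T hT => Or.inr (Or.inl ?_)
  exact (hτ.1 T hT).subset_supp

theorem isTube_singleton {t : PreTree I E} {v : List ℕ} (hv : v ∈ t.supp) :
    IsTube t {v} := by
  refine ⟨⟨v, Finset.mem_singleton_self v⟩, by simpa using hv, v,
    Finset.mem_singleton_self v, ?_, ?_⟩
  · intro u hu; rw [Finset.mem_singleton] at hu; subst hu; rfl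
  · intro u hu w h1 h2
    rw [Finset.mem_singleton] at hu ⊢; subst hu
    exact (h1.eq_of_length_le h2.length_le).symm

theorem singleton_mem {t : PreTree I E} {τ : Finset (Finset (List ℕ))}
    (hτ : IsBinaryTubing t τ) {v : List ℕ} (hv : v ∈ t.supp) : {v} ∈ τ := by
  refine mem_of_compat hτ (isTube_singleton hv) fun T hT => ?_
  by_cases h : v ∈ T
  · exact Or.inl (Finset.singleton_subset_iff.mpr h)
  · exact Or.inr (Or.inr (by simpa using h))

theorem mem_nonempty {t : PreTree I E} {τ : Finset (Finset (List ℕ))}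
    (hτ : IsBinaryTubing t τ) {S : Finset (List ℕ)} (hS : S ∈ τ) : S.Nonempty :=
  (hτ.1 S hS).nonempty

/-- Two members of a tubing sharing an element are nested. -/
theorem nested_of_inter {t : PreTree I E} {τ : Finset (Finset (List ℕ))}
    (hτ : IsBinaryTubing t τ) {S T : Finset (List ℕ)} (hS : S ∈ τ) (hT : T ∈ τ)
    {v : List ℕ} (hvS : v ∈ S) (hvT : v ∈ T) : S ⊆ T ∨ T ⊆ S := by
  rcases hτ.2.1 S hS T hT with h | h | h
  · exact Or.inl h
  · exact Or.inr h
  · exact absurd hvT (Finset.disjoint_left.mp h hvS)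

end TubingLemmas

section SplitLemmas
open scoped Classical

variable {I : Type} {E : I → Type} {t : PreTree I E} {τ : Finset (Finset (List ℕ))}

theorem prefix_dropLast_of_ne {w l : List ℕ} (h : w <+: l) (hne : w ≠ l) :
    w <+: l.dropLast := by
  obtain ⟨c, rfl⟩ := h
  have hc : c ≠ [] := fun hc => hne (by simp [hc])
  rw [List.dropLast_append_of_ne_nil hc]
  exact List.prefix_append _ _

/-- A child: a maximal proper member of the tubing. -/
def IsChild (t : PreTree I E) (τ : Finset (Finset (List ℕ)))
    (C : Finset (List ℕ)) : Prop :=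
  C ∈ τ ∧ C ⊂ t.supp ∧ ∀ S ∈ τ, C ⊂ S → S = t.supp

theorem exists_child (hτ : IsBinaryTubing t τ) {S0 : Finset (List ℕ)}
    (hS0 : S0 ∈ τ) (hS0' : S0 ≠ t.supp) : ∃ C, IsChild t τ C ∧ S0 ⊆ C := by
  have hne : (τ.filter fun T => S0 ⊆ T ∧ T ≠ t.supp).Nonempty :=
    ⟨S0, Finset.mem_filter.mpr ⟨hS0, subset_rfl, hS0'⟩⟩
  obtain ⟨C, hC, hmax⟩ : ∃ C ∈ (τ.filter fun T => S0 ⊆ T ∧ T ≠ t.supp),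
      ∀ x ∈ (τ.filter fun T => S0 ⊆ T ∧ T ≠ t.supp), ¬ C < x := by
    obtain ⟨C, hC⟩ := Finset.exists_maximal hne
    exact ⟨C, hC.1, fun x hx hlt => hlt.not_ge (hC.2 hx hlt.le)⟩
  rw [Finset.mem_filter] at hC
  refine ⟨C, ⟨hC.1, ?_, ?_⟩, hC.2.1⟩
  · exact lt_of_le_of_ne (hτ.1 C hC.1).subset_supp hC.2.2
  · intro S hS hCS
    by_contra hSne
    exact hmax S (Finset.mem_filter.mpr ⟨hS, hC.2.1.trans hCS.subset, hSne⟩) hCS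

theorem child_eq_or_disjoint (hτ : IsBinaryTubing t τ) {C C' : Finset (List ℕ)}
    (h : IsChild t τ C) (h' : IsChild t τ C') : C = C' ∨ Disjoint C C' := by
  rcases hτ.2.1 C h.1 C' h'.1 with h1 | h1 | h1
  · rcases eq_or_lt_of_le h1 with h2 | h2
    · exact Or.inl h2
    · exact absurd (h.2.2 C' h'.1 h2) h'.2.1.ne
  · rcases eq_or_lt_of_le h1 with h2 | h2
    · exact Or.inl h2.symm
    · exact absurd (h'.2.2 C h.1 h2) h.2.1.ne
  · exact Or.inr h1

theorem root_of_mem_nil {B : Finset (List ℕ)} (h : ([] : List ℕ) ∈ B) :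
    tubeRoot B = [] := tubeRoot_eq ⟨h, fun v _ => List.nil_prefix⟩

theorem exists_split_pair (ht : t.WF) (hτ : IsBinaryTubing t τ)
    (hbig : 1 < t.supp.card) :
    ∃ A B, IsChild t τ A ∧ IsChild t τ B ∧ ([] : List ℕ) ∈ B ∧ ([] : List ℕ) ∉ A ∧
      Disjoint A B ∧ A ∪ B = t.supp := by
  have hsing : ∀ v ∈ t.supp, ({v} : Finset (List ℕ)) ≠ t.supp := by
    intro v _ h
    rw [← h] at hbig; simp at hbig
  -- the child containing the root
  obtain ⟨B, hB, hB0⟩ := exists_child hτ (singleton_mem hτ ht.1) (hsing [] ht.1)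
  have h0B : ([] : List ℕ) ∈ B := hB0 (Finset.mem_singleton_self _)
  -- a vertex outside B
  obtain ⟨v0, hv0s, hv0B⟩ := Finset.exists_of_ssubset hB.2.1
  obtain ⟨A, hA, hA0⟩ := exists_child hτ (singleton_mem hτ hv0s) (hsing v0 hv0s)
  have hv0A : v0 ∈ A := hA0 (Finset.mem_singleton_self _)
  have hAB : A ≠ B := fun h => hv0B (h ▸ hv0A)
  have hdisj : Disjoint A B := (child_eq_or_disjoint hτ hA hB).resolve_left hAB
  have h0A : ([] : List ℕ) ∉ A := fun h => Finset.disjoint_left.mp hdisj h h0B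
  refine ⟨A, B, hA, hB, h0B, h0A, hdisj, ?_⟩
  apply Finset.Subset.antisymm
  · exact Finset.union_subset (hτ.1 A hA.1).subset_supp (hτ.1 B hB.1).subset_supp
  -- main point: no third child
  intro w hws
  by_contra hw
  rw [Finset.mem_union, not_or] at hw
  obtain ⟨hwA, hwB⟩ := hw
  obtain ⟨C, hC, hC0⟩ := exists_child hτ (singleton_mem hτ hws) (hsing w hws)
  have hwC : w ∈ C := hC0 (Finset.mem_singleton_self _)
  have hCA : C ≠ A := fun h => hwA (h ▸ hwC)
  have hCB : C ≠ B := fun h => hwB (h ▸ hwC)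
  -- merge A with the child containing the parent of the root of A
  set rA := tubeRoot A with hrA
  have htubeA : IsTube t A := hτ.1 A hA.1
  have hrAmem : rA ∈ A := htubeA.root_mem
  have hrAne : rA ≠ [] := fun h => h0A (h ▸ hrAmem)
  set p := rA.dropLast with hp
  have hpPre : p <+: rA := List.dropLast_prefix _
  have hps : p ∈ t.supp := ht.2.1 rA (htubeA.subset_supp hrAmem) p hpPre
  have hpA : p ∉ A := by
    intro h
    have h1 := (htubeA.root_prefix h).length_le
    rw [hp, List.length_dropLast, ← hrA] at h1
    have h2 : 0 < rA.length := List.length_pos_iff.mpr hrAne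
    omega
  obtain ⟨C', hC', hC'0⟩ := exists_child hτ (singleton_mem hτ hps) (hsing p hps)
  have hpC' : p ∈ C' := hC'0 (Finset.mem_singleton_self _)
  have hC'A : C' ≠ A := fun h => hpA (h ▸ hpC')
  have htubeC' : IsTube t C' := hτ.1 C' hC'.1
  set rC' := tubeRoot C' with hrC'
  -- M = A ∪ C' is a tube
  have hM : IsTube t (A ∪ C') := by
    refine ⟨⟨p, Finset.mem_union_right _ hpC'⟩,
      Finset.union_subset htubeA.subset_supp htubeC'.subset_supp,
      rC', Finset.mem_union_right _ htubeC'.root_mem, ?_, ?_⟩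
    · intro v hv
      rcases Finset.mem_union.mp hv with hv | hv
      · exact ((htubeC'.root_prefix hpC').trans hpPre).trans (htubeA.root_prefix hv)
      · exact htubeC'.root_prefix hv
    · intro v hv u h1 h2
      rcases Finset.mem_union.mp hv with hv | hv
      · rcases List.prefix_or_prefix_of_prefix h2 (htubeA.root_prefix hv) with h3 | h3
        · rcases eq_or_ne u rA with rfl | hne
          · exact Finset.mem_union_left _ hrAmem
          · exact Finset.mem_union_right _
              (htubeC'.convex p hpC' u h1 (prefix_dropLast_of_ne h3 hne))
        · exact Finset.mem_union_left _ (htubeA.convex v hv u h3 h2)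
      · exact Finset.mem_union_right _ (htubeC'.convex v hv u h1 h2)
  have hMmem : A ∪ C' ∈ τ := by
    refine mem_of_compat hτ hM fun T hT => ?_
    rcases eq_or_ne T t.supp with rfl | hTne
    · exact Or.inl hM.subset_supp
    · obtain ⟨CT, hCT, hTCT⟩ := exists_child hτ hT hTne
      rcases child_eq_or_disjoint hτ hCT hA with rfl | d1
      · exact Or.inr (Or.inl (hTCT.trans Finset.subset_union_left))
      · rcases child_eq_or_disjoint hτ hCT hC' with rfl | d2
        · exact Or.inr (Or.inl (hTCT.trans Finset.subset_union_right))
        · refine Or.inr (Or.inr (Finset.disjoint_left.mpr fun {a} ha haT => ?_))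
          rcases Finset.mem_union.mp ha with ha | ha
          · exact Finset.disjoint_left.mp d1 (hTCT haT) ha
          · exact Finset.disjoint_left.mp d2 (hTCT haT) ha
  -- a third child, giving an element outside M
  have hthird : ∃ C₃, IsChild t τ C₃ ∧ C₃ ≠ A ∧ C₃ ≠ C' := by
    rcases eq_or_ne C' B with rfl | hC'B
    · exact ⟨C, hC, hCA, hCB⟩
    · exact ⟨B, hB, fun h => hAB h.symm, fun h => hC'B h.symm⟩
  obtain ⟨C₃, hC₃, h₃A, h₃C'⟩ := hthird
  obtain ⟨x, hx₃⟩ := mem_nonempty hτ hC₃.1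
  have hxM : x ∉ A ∪ C' := by
    intro hx
    rcases Finset.mem_union.mp hx with hx | hx
    · exact Finset.disjoint_left.mp ((child_eq_or_disjoint hτ hC₃ hA).resolve_left h₃A) hx₃ hx
    · exact Finset.disjoint_left.mp ((child_eq_or_disjoint hτ hC₃ hC').resolve_left h₃C') hx₃ hx
  -- contradiction with maximality of the child A
  have hAM : A ⊂ A ∪ C' := by
    refine Finset.ssubset_iff_of_subset Finset.subset_union_left |>.mpr
      ⟨p, Finset.mem_union_right _ hpC', hpA⟩
  have := hA.2.2 _ hMmem hAM
  rw [this] at hxM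
  exact hxM ((hτ.1 C₃ hC₃.1).subset_supp hx₃)

end SplitLemmas

section SplitDef
open scoped Classical

variable {I : Type} {E : I → Type} {t : PreTree I E} {τ : Finset (Finset (List ℕ))}

/-- The principal downset of `t` below `r`. -/
def dset (t : PreTree I E) (r : List ℕ) : Finset (List ℕ) :=
  t.supp.filter (r <+: ·)

/-- `r` is the root of the lower tube of the top-level split of the tubing `τ`. -/
def Split (t : PreTree I E) (τ : Finset (Finset (List ℕ))) (r : List ℕ) : Prop :=
  r ∈ t.supp ∧ r ≠ [] ∧ dset t r ∈ τ ∧ (t.supp \ dset t r) ∈ τ ∧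
  (∀ S ∈ τ, S ≠ t.supp → S ⊆ dset t r ∨ S ⊆ t.supp \ dset t r) ∧
  (∀ S ∈ τ, dset t r ⊂ S → S = t.supp)

theorem nil_not_mem_dset {r : List ℕ} (hr : r ≠ []) : ([] : List ℕ) ∉ dset t r := by
  simp only [dset, Finset.mem_filter, not_and]
  intro _ h
  exact hr (List.prefix_nil.mp h)

theorem mem_dset {r v : List ℕ} : v ∈ dset t r ↔ v ∈ t.supp ∧ r <+: v :=
  Finset.mem_filter

theorem root_mem_dset {r : List ℕ} (hr : r ∈ t.supp) : r ∈ dset t r :=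
  mem_dset.mpr ⟨hr, List.prefix_refl r⟩

theorem hasRoot_dset {r : List ℕ} (hr : r ∈ t.supp) : HasRoot (dset t r) r :=
  ⟨root_mem_dset hr, fun v hv => (mem_dset.mp hv).2⟩

theorem exists_split (ht : t.WF) (hτ : IsBinaryTubing t τ)
    (hbig : 1 < t.supp.card) : ∃ r, Split t τ r := by
  obtain ⟨A, B, hA, hB, h0B, h0A, hdisj, hun⟩ := exists_split_pair ht hτ hbig
  have htubeA : IsTube t A := hτ.1 A hA.1
  have htubeB : IsTube t B := hτ.1 B hB.1
  have hrootB : tubeRoot B = [] := root_of_mem_nil h0B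
  -- A is closed under descendants
  have hdown : ∀ v ∈ A, ∀ c ∈ t.supp, v <+: c → c ∈ A := by
    intro v hv c hc hvc
    have hc' : c ∈ A ∪ B := hun ▸ hc
    rcases Finset.mem_union.mp hc' with h | h
    · exact h
    · exfalso
      have : v ∈ B := htubeB.convex c h v (hrootB ▸ List.nil_prefix) hvc
      exact Finset.disjoint_left.mp hdisj hv this
  set r := tubeRoot A with hr
  have hrA : r ∈ A := htubeA.root_mem
  have hAd : A = dset t r := by
    apply Finset.Subset.antisymm
    · intro w hw
      exact mem_dset.mpr ⟨htubeA.subset_supp hw, htubeA.root_prefix hw⟩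
    · intro w hw
      obtain ⟨hw1, hw2⟩ := mem_dset.mp hw
      exact hdown r hrA w hw1 hw2
  have hBd : B = t.supp \ dset t r := by
    rw [← hAd]
    apply Finset.Subset.antisymm
    · intro b hb
      exact Finset.mem_sdiff.mpr ⟨htubeB.subset_supp hb,
        fun hbA => Finset.disjoint_left.mp hdisj hbA hb⟩
    · intro b hb
      obtain ⟨hb1, hb2⟩ := Finset.mem_sdiff.mp hb
      rcases Finset.mem_union.mp (hun ▸ hb1) with h | h
      · exact absurd h hb2
      · exact h
  refine ⟨r, htubeA.subset_supp hrA, fun h => h0A (h ▸ hrA), hAd ▸ hA.1, hBd ▸ hB.1,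
    ?_, ?_⟩
  · intro S hS hSne
    obtain ⟨C, hC, hSC⟩ := exists_child hτ hS hSne
    rcases child_eq_or_disjoint hτ hC hA with rfl | d1
    · exact Or.inl (hAd ▸ hSC)
    · rcases child_eq_or_disjoint hτ hC hB with rfl | d2
      · exact Or.inr (hBd ▸ hSC)
      · exfalso
        obtain ⟨x, hx⟩ := mem_nonempty hτ hC.1
        have hxs : x ∈ t.supp := (hτ.1 C hC.1).subset_supp hx
        rcases Finset.mem_union.mp (hun ▸ hxs) with h | h
        · exact Finset.disjoint_left.mp d1 hx h
        · exact Finset.disjoint_left.mp d2 hx h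
  · intro S hS hsub
    exact hA.2.2 S hS (hAd ▸ hsub)

theorem Split.ne_supp (ht : t.WF) {r : List ℕ} (h : Split t τ r) :
    dset t r ≠ t.supp := fun he => nil_not_mem_dset h.2.1 (he ▸ ht.1)

theorem nil_mem_sdiff_dset (ht : t.WF) {r : List ℕ} (hr : r ≠ []) :
    ([] : List ℕ) ∈ t.supp \ dset t r :=
  Finset.mem_sdiff.mpr ⟨ht.1, nil_not_mem_dset hr⟩

theorem split_unique (ht : t.WF) {r r' : List ℕ}
    (h : Split t τ r) (h' : Split t τ r') : r = r' := by
  rcases h.2.2.2.2.1 _ h'.2.2.1 (Split.ne_supp ht h') with hsub | hsub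
  · rcases eq_or_lt_of_le hsub with heq | hlt
    · exact (HasRoot.unique (heq ▸ hasRoot_dset h'.1) (hasRoot_dset h.1)).symm
    · exact absurd (h'.2.2.2.2.2 _ h.2.2.1 hlt) (Split.ne_supp ht h)
  · exfalso
    have hne : dset t r' ≠ t.supp \ dset t r := fun he => by
      have : ([] : List ℕ) ∈ dset t r' := he ▸ nil_mem_sdiff_dset ht h.2.1
      exact nil_not_mem_dset h'.2.1 this
    have hlt : dset t r' ⊂ t.supp \ dset t r := lt_of_le_of_ne hsub hne
    have hs := h'.2.2.2.2.2 _ h.2.2.2.1 hlt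
    have hr2 : r ∈ t.supp \ dset t r := by rw [hs]; exact h.1
    exact (Finset.mem_sdiff.mp hr2).2 (root_mem_dset h.1)

end SplitDef

section Shift
open scoped Classical

variable {I : Type} {E : I → Type} {t : PreTree I E}

/-- Translate a set of addresses into the subtree at `r`. -/
def shUp (r : List ℕ) (S : Finset (List ℕ)) : Finset (List ℕ) := S.image (r ++ ·)

/-- Translate a set of addresses out of the subtree at `r`. -/
def shDn (r : List ℕ) (S : Finset (List ℕ)) : Finset (List ℕ) :=
  S.image fun v => v.drop r.length

theorem append_inj (r : List ℕ) : Function.Injective (r ++ ·) := fun a b h => by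
  simpa using h

theorem shUp_mem_iff {r w : List ℕ} {S : Finset (List ℕ)} :
    r ++ w ∈ shUp r S ↔ w ∈ S := by
  constructor
  · intro h
    obtain ⟨a, ha, he⟩ := Finset.mem_image.mp h
    rwa [← append_inj r he]
  · intro h
    exact Finset.mem_image.mpr ⟨w, h, rfl⟩

theorem shDn_shUp (r : List ℕ) (S : Finset (List ℕ)) : shDn r (shUp r S) = S := by
  unfold shDn shUp
  rw [Finset.image_image]
  have : ((fun v : List ℕ => v.drop r.length) ∘ (r ++ ·)) = id := by
    funext a; simp
  rw [this, Finset.image_id]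

theorem shUp_shDn {r : List ℕ} {S : Finset (List ℕ)} (h : ∀ v ∈ S, r <+: v) :
    shUp r (shDn r S) = S := by
  unfold shDn shUp
  rw [Finset.image_image]
  rw [Finset.image_congr (g := id), Finset.image_id]
  intro x hx
  obtain ⟨c, rfl⟩ := h x hx
  simp

theorem mem_shDn_iff {r w : List ℕ} {S : Finset (List ℕ)} (h : ∀ v ∈ S, r <+: v) :
    w ∈ shDn r S ↔ r ++ w ∈ S := by
  constructor
  · intro hw
    have : r ++ w ∈ shUp r (shDn r S) := shUp_mem_iff.mpr hw
    rwa [shUp_shDn h] at this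
  · intro hw
    exact Finset.mem_image.mpr ⟨r ++ w, hw, by simp⟩

theorem shUp_subset_iff {r : List ℕ} {S T : Finset (List ℕ)} :
    shUp r S ⊆ shUp r T ↔ S ⊆ T :=
  Finset.image_subset_image_iff (append_inj r)

theorem shUp_disjoint_iff {r : List ℕ} {S T : Finset (List ℕ)} :
    Disjoint (shUp r S) (shUp r T) ↔ Disjoint S T :=
  Finset.disjoint_image (append_inj r)

theorem shUp_inj {r : List ℕ} : Function.Injective (shUp r) := fun S T h => by
  rw [← shDn_shUp r S, ← shDn_shUp r T, h]

theorem shUp_ssubset_iff {r : List ℕ} {S T : Finset (List ℕ)} :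
    shUp r S ⊂ shUp r T ↔ S ⊂ T := by
  rw [Finset.ssubset_def, Finset.ssubset_def, shUp_subset_iff, shUp_subset_iff]

theorem hasRoot_shUp {r ρ : List ℕ} {S : Finset (List ℕ)} (h : HasRoot S ρ) :
    HasRoot (shUp r S) (r ++ ρ) := by
  refine ⟨shUp_mem_iff.mpr h.1, fun v hv => ?_⟩
  obtain ⟨a, ha, rfl⟩ := Finset.mem_image.mp hv
  exact (List.prefix_append_right_inj r).mpr (h.2 a ha)

theorem hasRoot_shDn {r ρ : List ℕ} {S : Finset (List ℕ)} (h : ∀ v ∈ S, r <+: v)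
    (hρ : HasRoot S (r ++ ρ)) : HasRoot (shDn r S) ρ := by
  refine ⟨(mem_shDn_iff h).mpr hρ.1, fun v hv => ?_⟩
  exact (List.prefix_append_right_inj r).mp (hρ.2 _ ((mem_shDn_iff h).mp hv))

theorem subPre_supp {r : List ℕ} (hr : r ∈ t.supp) :
    (subPre t r).supp = shDn r (dset t r) := by
  show insert [] (shDn r (dset t r)) = shDn r (dset t r)
  rw [Finset.insert_eq_self]
  exact Finset.mem_image.mpr ⟨r, root_mem_dset hr, by simp⟩

theorem complPre_supp (ht : t.WF) {r : List ℕ} (hrne : r ≠ []) :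
    (complPre t (dset t r)).supp = t.supp \ dset t r := by
  show insert [] (t.supp \ dset t r) = t.supp \ dset t r
  rw [Finset.insert_eq_self]
  exact nil_mem_sdiff_dset ht hrne

theorem dset_pref {r : List ℕ} : ∀ v ∈ dset t r, r <+: v := fun v hv =>
  (mem_dset.mp hv).2

theorem isTube_up {r : List ℕ} (hr : r ∈ t.supp) {S' : Finset (List ℕ)}
    (h : IsTube (subPre t r) S') :
    IsTube t (shUp r S') ∧ shUp r S' ⊆ dset t r := by
  have hsub : shUp r S' ⊆ dset t r := by
    intro v hv
    obtain ⟨w, hw, rfl⟩ := Finset.mem_image.mp hv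
    have : w ∈ shDn r (dset t r) := (subPre_supp hr) ▸ h.subset_supp hw
    rwa [mem_shDn_iff dset_pref] at this
  refine ⟨⟨?_, hsub.trans (Finset.filter_subset _ _), r ++ tubeRoot S',
    (hasRoot_shUp h.hasRoot).1, (hasRoot_shUp h.hasRoot).2, ?_⟩, hsub⟩
  · obtain ⟨x, hx⟩ := h.nonempty
    exact ⟨r ++ x, shUp_mem_iff.mpr hx⟩
  · intro v hv w h1 h2
    obtain ⟨v', hv', rfl⟩ := Finset.mem_image.mp hv
    obtain ⟨w', rfl⟩ : ∃ w', r ++ w' = w := (List.prefix_append r _).trans h1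
    rw [List.prefix_append_right_inj] at h1 h2
    exact shUp_mem_iff.mpr (h.convex v' hv' w' (tubeRoot_eq h.hasRoot ▸ h1) h2)

theorem isTube_dn {r : List ℕ} (hr : r ∈ t.supp) {S : Finset (List ℕ)}
    (hS : IsTube t S) (hsub : S ⊆ dset t r) : IsTube (subPre t r) (shDn r S) := by
  have hpre : ∀ v ∈ S, r <+: v := fun v hv => dset_pref v (hsub hv)
  obtain ⟨ρ', hρ'⟩ : ∃ ρ', r ++ ρ' = tubeRoot S := hpre _ hS.root_mem
  refine ⟨?_, ?_, ρ', (hasRoot_shDn hpre (hρ' ▸ hS.hasRoot)).1,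
    (hasRoot_shDn hpre (hρ' ▸ hS.hasRoot)).2, ?_⟩
  · obtain ⟨x, hx⟩ := hS.nonempty
    exact ⟨x.drop r.length, Finset.mem_image.mpr ⟨x, hx, rfl⟩⟩
  · rw [subPre_supp hr]
    exact Finset.image_subset_image hsub
  · intro v hv w h1 h2
    rw [mem_shDn_iff hpre] at hv ⊢
    refine hS.convex _ hv _ (hρ' ▸ ?_) ?_
    · exact (List.prefix_append_right_inj r).mpr h1
    · exact (List.prefix_append_right_inj r).mpr h2

theorem isTube_compl (ht : t.WF) {r : List ℕ} (hrne : r ≠ []) {S : Finset (List ℕ)} :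
    IsTube (complPre t (dset t r)) S ↔ IsTube t S ∧ S ⊆ t.supp \ dset t r := by
  unfold IsTube
  rw [complPre_supp ht hrne]
  constructor
  · rintro ⟨h1, h2, h3⟩
    exact ⟨⟨h1, h2.trans (Finset.sdiff_subset), h3⟩, h2⟩
  · rintro ⟨⟨h1, -, h3⟩, h2⟩
    exact ⟨h1, h2, h3⟩

end Shift

section Transfer
open scoped Classical

variable {I : Type} {E : I → Type} {t : PreTree I E} {τ : Finset (Finset (List ℕ))}
  {r : List ℕ}

theorem dset_downclosed (t : PreTree I E) (r : List ℕ) :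
    ∀ v ∈ dset t r, ∀ w ∈ t.supp, v <+: w → w ∈ dset t r := by
  intro v hv w hw hvw
  exact mem_dset.mpr ⟨hw, (mem_dset.mp hv).2.trans hvw⟩

theorem union_dset_sdiff (ht : t.WF) (hr : r ∈ t.supp) :
    dset t r ∪ (t.supp \ dset t r) = t.supp :=
  Finset.union_sdiff_of_subset (Finset.filter_subset _ _)

theorem disj_dset : Disjoint (t.supp \ dset t r) (dset t r) := Finset.sdiff_disjoint

theorem compl_tubing (ht : t.WF) (hτ : IsBinaryTubing t τ) (hsp : Split t τ r) :
    IsBinaryTubing (complPre t (dset t r))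
      (τ.filter (· ⊆ t.supp \ dset t r)) := by
  obtain ⟨hr, hrne, hA, hB, hprop, hchild⟩ := hsp
  refine ⟨?_, ?_, ?_⟩
  · intro S hS
    rw [Finset.mem_filter] at hS
    exact (isTube_compl ht hrne).mpr ⟨hτ.1 _ hS.1, hS.2⟩
  · intro S hS T hT
    rw [Finset.mem_filter] at hS hT
    exact hτ.2.1 S hS.1 T hT.1
  · intro υ hsub htubes hlam
    have key : ∀ S ∈ υ, S ∈ τ ∧ S ⊆ t.supp \ dset t r := by
      intro S hSυ
      have hTube := (isTube_compl ht hrne).mp (htubes S hSυ)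
      refine ⟨?_, hTube.2⟩
      have hun : τ ∪ υ = τ := by
        refine hτ.2.2 (τ ∪ υ) Finset.subset_union_left ?_ ?_
        · intro T hT
          rcases Finset.mem_union.mp hT with hT | hT
          · exact hτ.1 T hT
          · exact ((isTube_compl ht hrne).mp (htubes T hT)).1
        · have mixed : ∀ T ∈ τ, ∀ S' ∈ υ,
              T ⊆ S' ∨ S' ⊆ T ∨ Disjoint T S' := by
            intro T hT S' hS'υ
            have hS'B := ((isTube_compl ht hrne).mp (htubes S' hS'υ)).2
            rcases eq_or_ne T t.supp with rfl | hTne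
            · exact Or.inr (Or.inl (hS'B.trans Finset.sdiff_subset))
            · rcases hprop T hT hTne with hTA | hTB
              · exact Or.inr (Or.inr (Finset.disjoint_right.mpr fun {a} ha =>
                  fun haT => Finset.disjoint_left.mp disj_dset (hS'B ha) (hTA haT)))
              · have hT2 : T ∈ τ.filter (· ⊆ t.supp \ dset t r) :=
                  Finset.mem_filter.mpr ⟨hT, hTB⟩
                exact hlam T (hsub hT2) S' hS'υ
          intro X hX Y hY
          rcases Finset.mem_union.mp hX with hX | hX <;>
            rcases Finset.mem_union.mp hY with hY | hY
          · exact hτ.2.1 X hX Y hY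
          · exact mixed X hX Y hY
          · rcases mixed Y hY X hX with h | h | h
            · exact Or.inr (Or.inl h)
            · exact Or.inl h
            · exact Or.inr (Or.inr h.symm)
          · exact hlam X hX Y hY
      rw [← hun]
      exact Finset.mem_union_right _ hSυ
    refine Finset.Subset.antisymm (fun S hS => Finset.mem_filter.mpr (key S hS)) hsub

theorem shDn_laminar_transfer {S T : Finset (List ℕ)}
    (hS : ∀ v ∈ S, r <+: v) (hT : ∀ v ∈ T, r <+: v)
    (h : S ⊆ T ∨ T ⊆ S ∨ Disjoint S T) :
    shDn r S ⊆ shDn r T ∨ shDn r T ⊆ shDn r S ∨ Disjoint (shDn r S) (shDn r T) := by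
  rcases h with h | h | h
  · exact Or.inl (Finset.image_subset_image h)
  · exact Or.inr (Or.inl (Finset.image_subset_image h))
  · refine Or.inr (Or.inr (Finset.disjoint_left.mpr fun {w} hw hw' => ?_))
    rw [mem_shDn_iff hS] at hw
    rw [mem_shDn_iff hT] at hw'
    exact Finset.disjoint_left.mp h hw hw'

theorem sub_tubing (ht : t.WF) (hτ : IsBinaryTubing t τ) (hsp : Split t τ r) :
    IsBinaryTubing (subPre t r) ((τ.filter (· ⊆ dset t r)).image (shDn r)) := by
  obtain ⟨hr, hrne, hA, hB, hprop, hchild⟩ := hsp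
  refine ⟨?_, ?_, ?_⟩
  · intro S' hS'
    obtain ⟨S, hS, rfl⟩ := Finset.mem_image.mp hS'
    rw [Finset.mem_filter] at hS
    exact isTube_dn hr (hτ.1 _ hS.1) hS.2
  · intro S' hS' T' hT'
    obtain ⟨S, hS, rfl⟩ := Finset.mem_image.mp hS'
    obtain ⟨T, hT, rfl⟩ := Finset.mem_image.mp hT'
    rw [Finset.mem_filter] at hS hT
    exact shDn_laminar_transfer (fun v hv => dset_pref v (hS.2 hv))
      (fun v hv => dset_pref v (hT.2 hv)) (hτ.2.1 S hS.1 T hT.1)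
  · intro υ hsub htubes hlam
    have himg : ∀ S' ∈ υ, IsTube t (shUp r S') ∧ shUp r S' ⊆ dset t r :=
      fun S' hS' => isTube_up hr (htubes S' hS')
    have key : ∀ S' ∈ υ, shUp r S' ∈ τ := by
      intro S' hS'υ
      have hun : τ ∪ υ.image (shUp r) = τ := by
        refine hτ.2.2 _ Finset.subset_union_left ?_ ?_
        · intro T hT
          rcases Finset.mem_union.mp hT with hT | hT
          · exact hτ.1 T hT
          · obtain ⟨T', hT', rfl⟩ := Finset.mem_image.mp hT
            exact (himg T' hT').1
        · have mixed : ∀ T ∈ τ, ∀ M' ∈ υ,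
              T ⊆ shUp r M' ∨ shUp r M' ⊆ T ∨ Disjoint T (shUp r M') := by
            intro T hT M' hM'
            rcases eq_or_ne T t.supp with rfl | hTne
            · exact Or.inr (Or.inl (himg M' hM').1.subset_supp)
            · rcases hprop T hT hTne with hTA | hTB
              · have hTmem : shDn r T ∈ υ := hsub (Finset.mem_image.mpr
                  ⟨T, Finset.mem_filter.mpr ⟨hT, hTA⟩, rfl⟩)
                have hTpref : ∀ v ∈ T, r <+: v := fun v hv => dset_pref v (hTA hv)
                have hTid : shUp r (shDn r T) = T := shUp_shDn hTpref
                rcases hlam _ hTmem M' hM' with h | h | h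
                · refine Or.inl ?_
                  calc T = shUp r (shDn r T) := hTid.symm
                    _ ⊆ shUp r M' := Finset.image_subset_image h
                · refine Or.inr (Or.inl ?_)
                  calc shUp r M' ⊆ shUp r (shDn r T) := Finset.image_subset_image h
                    _ = T := hTid
                · refine Or.inr (Or.inr ?_)
                  rw [← hTid]
                  exact shUp_disjoint_iff.mpr h
              · refine Or.inr (Or.inr (Finset.disjoint_left.mpr fun {a} ha ha' => ?_))
                exact Finset.disjoint_left.mp disj_dset (hTB ha) ((himg M' hM').2 ha')
          intro X hX Y hY
          rcases Finset.mem_union.mp hX with hX | hX <;>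
            rcases Finset.mem_union.mp hY with hY | hY
          · exact hτ.2.1 X hX Y hY
          · obtain ⟨Y', hY', rfl⟩ := Finset.mem_image.mp hY
            exact mixed X hX Y' hY'
          · obtain ⟨X', hX', rfl⟩ := Finset.mem_image.mp hX
            rcases mixed Y hY X' hX' with h | h | h
            · exact Or.inr (Or.inl h)
            · exact Or.inl h
            · exact Or.inr (Or.inr h.symm)
          · obtain ⟨X', hX', rfl⟩ := Finset.mem_image.mp hX
            obtain ⟨Y', hY', rfl⟩ := Finset.mem_image.mp hY
            rcases hlam X' hX' Y' hY' with h | h | h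
            · exact Or.inl (Finset.image_subset_image h)
            · exact Or.inr (Or.inl (Finset.image_subset_image h))
            · exact Or.inr (Or.inr (shUp_disjoint_iff.mpr h))
      rw [← hun]
      exact Finset.mem_union_right _ (Finset.mem_image.mpr ⟨S', hS'υ, rfl⟩)
    refine Finset.Subset.antisymm ?_ hsub
    intro S' hS'υ
    refine Finset.mem_image.mpr ⟨shUp r S', Finset.mem_filter.mpr
      ⟨key S' hS'υ, (himg S' hS'υ).2⟩, ?_⟩
    exact shDn_shUp r S'

end Transfer

section Glue
open scoped Classical

variable {I : Type} {E : I → Type} {t : PreTree I E} {r : List ℕ}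
  {τ₁ τ₂ : Finset (Finset (List ℕ))}

/-- The tubing of `t` glued from a tubing of the subtree at `r` and a tubing of the
complement. -/
def glueT (t : PreTree I E) (r : List ℕ) (τ₁ τ₂ : Finset (Finset (List ℕ))) :
    Finset (Finset (List ℕ)) :=
  insert t.supp (τ₂ ∪ τ₁.image (shUp r))

theorem sdiff_dset_mem_glue (ht : t.WF) (hrne : r ≠ [])
    (h2 : IsBinaryTubing (complPre t (dset t r)) τ₂) :
    t.supp \ dset t r ∈ τ₂ := by
  have hwf : (complPre t (dset t r)).WF :=
    complPre_wf t ht (dset t r) (dset_downclosed t r)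
  have := supp_mem hwf h2
  rwa [complPre_supp ht hrne] at this

theorem dset_mem_glue_aux (ht : t.WF) (hr : r ∈ t.supp)
    (h1 : IsBinaryTubing (subPre t r) τ₁) :
    dset t r ∈ τ₁.image (shUp r) := by
  have hwf : (subPre t r).WF := subPre_wf t ht r
  have hmem := supp_mem hwf h1
  refine Finset.mem_image.mpr ⟨(subPre t r).supp, hmem, ?_⟩
  rw [subPre_supp hr, shUp_shDn dset_pref]

theorem glue_mem_iff {S : Finset (List ℕ)} :
    S ∈ glueT t r τ₁ τ₂ ↔ S = t.supp ∨ S ∈ τ₂ ∨ ∃ S' ∈ τ₁, shUp r S' = S := by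
  unfold glueT
  simp only [Finset.mem_insert, Finset.mem_union, Finset.mem_image]

theorem glue_tubing (ht : t.WF) (hr : r ∈ t.supp) (hrne : r ≠ [])
    (h1 : IsBinaryTubing (subPre t r) τ₁)
    (h2 : IsBinaryTubing (complPre t (dset t r)) τ₂) :
    IsBinaryTubing t (glueT t r τ₁ τ₂) ∧ Split t (glueT t r τ₁ τ₂) r := by
  have hτ₂f : ∀ S ∈ τ₂, IsTube t S ∧ S ⊆ t.supp \ dset t r := fun S hS =>
    (isTube_compl ht hrne).mp (h2.1 S hS)
  have hτ₁f : ∀ S' ∈ τ₁, IsTube t (shUp r S') ∧ shUp r S' ⊆ dset t r := fun S' hS' =>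
    isTube_up hr (h1.1 S' hS')
  have hAmem : dset t r ∈ glueT t r τ₁ τ₂ := by
    rw [glue_mem_iff]
    obtain ⟨S', hS', he⟩ := Finset.mem_image.mp (dset_mem_glue_aux ht hr h1)
    exact Or.inr (Or.inr ⟨S', hS', he⟩)
  have hBmem : t.supp \ dset t r ∈ glueT t r τ₁ τ₂ := by
    rw [glue_mem_iff]
    exact Or.inr (Or.inl (sdiff_dset_mem_glue ht hrne h2))
  have htubes : ∀ S ∈ glueT t r τ₁ τ₂, IsTube t S := by
    intro S hS
    rcases glue_mem_iff.mp hS with rfl | hS | ⟨S', hS', rfl⟩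
    · exact isTube_supp ht
    · exact (hτ₂f S hS).1
    · exact (hτ₁f S' hS').1
  have hlam : Laminar (glueT t r τ₁ τ₂) := by
    intro X hX Y hY
    rcases glue_mem_iff.mp hX with rfl | hX | ⟨X', hX', rfl⟩
    · exact Or.inr (Or.inl (htubes Y hY).subset_supp)
    · rcases glue_mem_iff.mp hY with rfl | hY | ⟨Y', hY', rfl⟩
      · exact Or.inl ((hτ₂f X hX).2.trans Finset.sdiff_subset)
      · exact h2.2.1 X hX Y hY
      · exact Or.inr (Or.inr (Finset.disjoint_left.mpr fun {a} ha ha' =>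
          Finset.disjoint_left.mp disj_dset ((hτ₂f X hX).2 ha) ((hτ₁f Y' hY').2 ha')))
    · rcases glue_mem_iff.mp hY with rfl | hY | ⟨Y', hY', rfl⟩
      · exact Or.inl (htubes _ hX).subset_supp
      · exact Or.inr (Or.inr (Finset.disjoint_left.mpr fun {a} ha ha' =>
          Finset.disjoint_left.mp disj_dset ((hτ₂f Y hY).2 ha') ((hτ₁f X' hX').2 ha)))
      · rcases h1.2.1 X' hX' Y' hY' with h | h | h
        · exact Or.inl (Finset.image_subset_image h)
        · exact Or.inr (Or.inl (Finset.image_subset_image h))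
        · exact Or.inr (Or.inr (shUp_disjoint_iff.mpr h))
  have hmax : ∀ υ : Finset (Finset (List ℕ)), glueT t r τ₁ τ₂ ⊆ υ →
      (∀ S ∈ υ, IsTube t S) → Laminar υ → υ = glueT t r τ₁ τ₂ := by
    intro υ hsubυ htubesυ hlamυ
    refine Finset.Subset.antisymm ?_ hsubυ
    intro S hSυ
    have htube := htubesυ S hSυ
    have hvsA := hlamυ S hSυ _ (hsubυ hAmem)
    have hvsB := hlamυ S hSυ _ (hsubυ hBmem)
    rcases hvsA with hSA | hAS | hdSA
    · -- S inside the lower tube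
      have hυA : ((υ.filter (· ⊆ dset t r)).image (shDn r)) = τ₁ := by
        refine h1.2.2 _ ?_ ?_ ?_
        · intro S₁ hS₁
          have hmem : shUp r S₁ ∈ υ := hsubυ (glue_mem_iff.mpr
            (Or.inr (Or.inr ⟨S₁, hS₁, rfl⟩)))
          refine Finset.mem_image.mpr ⟨shUp r S₁, Finset.mem_filter.mpr
            ⟨hmem, (hτ₁f S₁ hS₁).2⟩, shDn_shUp r S₁⟩
        · intro T' hT'
          obtain ⟨T, hT, rfl⟩ := Finset.mem_image.mp hT'
          rw [Finset.mem_filter] at hT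
          exact isTube_dn hr (htubesυ T hT.1) hT.2
        · intro X' hX' Y' hY'
          obtain ⟨X, hX, rfl⟩ := Finset.mem_image.mp hX'
          obtain ⟨Y, hY, rfl⟩ := Finset.mem_image.mp hY'
          rw [Finset.mem_filter] at hX hY
          exact shDn_laminar_transfer (fun v hv => dset_pref v (hX.2 hv))
            (fun v hv => dset_pref v (hY.2 hv)) (hlamυ X hX.1 Y hY.1)
      have hSd : shDn r S ∈ τ₁ := by
        rw [← hυA]
        exact Finset.mem_image.mpr ⟨S, Finset.mem_filter.mpr ⟨hSυ, hSA⟩, rfl⟩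
      refine glue_mem_iff.mpr (Or.inr (Or.inr ⟨shDn r S, hSd, ?_⟩))
      exact shUp_shDn fun v hv => dset_pref v (hSA hv)
    · -- S contains the lower tube
      rcases hlamυ S hSυ _ (hsubυ hBmem) with hSB | hBS | hdSB
      · -- S ⊆ B and A ⊆ S: impossible unless A empty
        exfalso
        exact Finset.disjoint_left.mp disj_dset (hSB (hAS (root_mem_dset hr)))
          (root_mem_dset hr)
      · -- S ⊇ A and S ⊇ B : S = t.supp
        have : S = t.supp := Finset.Subset.antisymm htube.subset_supp
          (by rw [← union_dset_sdiff ht hr]; exact Finset.union_subset hAS hBS)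
        rw [this]
        exact Finset.mem_insert_self _ _
      · -- S ⊇ A, S disjoint from B : S = A
        have : S = dset t r := by
          refine Finset.Subset.antisymm ?_ hAS
          intro x hx
          have hxs : x ∈ t.supp := htube.subset_supp hx
          rcases Finset.mem_union.mp ((union_dset_sdiff ht hr) ▸ hxs) with h | h
          · exact h
          · exact absurd h (fun hB' => Finset.disjoint_left.mp hdSB hx hB')
        rw [this]
        exact hAmem
    · -- S disjoint from A
      rcases hlamυ S hSυ _ (hsubυ hBmem) with hSB | hBS | hdSB
      · -- S ⊆ B
        have hυB : υ.filter (· ⊆ t.supp \ dset t r) = τ₂ := by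
          refine h2.2.2 _ ?_ ?_ ?_
          · intro S₂ hS₂
            exact Finset.mem_filter.mpr ⟨hsubυ (glue_mem_iff.mpr (Or.inr (Or.inl hS₂))),
              (hτ₂f S₂ hS₂).2⟩
          · intro T hT
            rw [Finset.mem_filter] at hT
            exact (isTube_compl ht hrne).mpr ⟨htubesυ T hT.1, hT.2⟩
          · intro X hX Y hY
            rw [Finset.mem_filter] at hX hY
            exact hlamυ X hX.1 Y hY.1
        have : S ∈ τ₂ := by
          rw [← hυB]
          exact Finset.mem_filter.mpr ⟨hSυ, hSB⟩
        exact glue_mem_iff.mpr (Or.inr (Or.inl this))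
      · -- B ⊆ S, disjoint from A: S = B
        have : S = t.supp \ dset t r := by
          refine Finset.Subset.antisymm ?_ hBS
          intro x hx
          have hxs : x ∈ t.supp := htube.subset_supp hx
          refine Finset.mem_sdiff.mpr ⟨hxs, fun hxA => ?_⟩
          exact Finset.disjoint_left.mp hdSA hx hxA
        rw [this]
        exact hBmem
      · -- disjoint from both: S empty, contradiction
        exfalso
        obtain ⟨x, hx⟩ := htube.nonempty
        have hxs : x ∈ t.supp := htube.subset_supp hx
        rcases Finset.mem_union.mp ((union_dset_sdiff ht hr) ▸ hxs) with h | h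
        · exact Finset.disjoint_left.mp hdSA hx h
        · exact Finset.disjoint_left.mp hdSB hx h
  refine ⟨⟨htubes, hlam, hmax⟩, hr, hrne, hAmem, hBmem, ?_, ?_⟩
  · intro S hS hSne
    rcases glue_mem_iff.mp hS with rfl | hS | ⟨S', hS', rfl⟩
    · exact absurd rfl hSne
    · exact Or.inr (hτ₂f S hS).2
    · exact Or.inl (hτ₁f S' hS').2
  · intro S hS hsubS
    rcases glue_mem_iff.mp hS with rfl | hS | ⟨S', hS', rfl⟩
    · rfl
    · exfalso
      exact Finset.disjoint_left.mp disj_dset ((hτ₂f S hS).2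
        (hsubS.subset (root_mem_dset hr))) (root_mem_dset hr)
    · exact absurd ((hτ₁f S' hS').2) (Finset.ssubset_def.mp hsubS).2

theorem glue_filter_A (ht : t.WF) (hr : r ∈ t.supp) (hrne : r ≠ [])
    (h1 : IsBinaryTubing (subPre t r) τ₁)
    (h2 : IsBinaryTubing (complPre t (dset t r)) τ₂) :
    ((glueT t r τ₁ τ₂).filter (· ⊆ dset t r)).image (shDn r) = τ₁ := by
  apply Finset.Subset.antisymm
  · intro S' hS'
    obtain ⟨S, hS, rfl⟩ := Finset.mem_image.mp hS'
    rw [Finset.mem_filter] at hS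
    rcases glue_mem_iff.mp hS.1 with rfl | hSm | ⟨S₁, hS₁, rfl⟩
    · exact absurd (hS.2 ht.1) (nil_not_mem_dset hrne)
    · exfalso
      obtain ⟨x, hx⟩ := ((isTube_compl ht hrne).mp (h2.1 S hSm)).1.nonempty
      exact Finset.disjoint_left.mp disj_dset
        (((isTube_compl ht hrne).mp (h2.1 S hSm)).2 hx) (hS.2 hx)
    · rw [shDn_shUp]
      exact hS₁
  · intro S₁ hS₁
    refine Finset.mem_image.mpr ⟨shUp r S₁, Finset.mem_filter.mpr
      ⟨glue_mem_iff.mpr (Or.inr (Or.inr ⟨S₁, hS₁, rfl⟩)),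
        (isTube_up hr (h1.1 S₁ hS₁)).2⟩, shDn_shUp r S₁⟩

theorem glue_filter_B (ht : t.WF) (hr : r ∈ t.supp) (hrne : r ≠ [])
    (h1 : IsBinaryTubing (subPre t r) τ₁)
    (h2 : IsBinaryTubing (complPre t (dset t r)) τ₂) :
    (glueT t r τ₁ τ₂).filter (· ⊆ t.supp \ dset t r) = τ₂ := by
  apply Finset.Subset.antisymm
  · intro S hS
    rw [Finset.mem_filter] at hS
    rcases glue_mem_iff.mp hS.1 with rfl | hSm | ⟨S₁, hS₁, rfl⟩
    · exact absurd (Finset.mem_sdiff.mp (hS.2 hr)).2 (not_not.mpr (root_mem_dset hr))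
    · exact hSm
    · exfalso
      obtain ⟨x, hx⟩ := (isTube_up hr (h1.1 S₁ hS₁)).1.nonempty
      exact Finset.disjoint_left.mp disj_dset (hS.2 hx)
        ((isTube_up hr (h1.1 S₁ hS₁)).2 hx)
  · intro S₂ hS₂
    exact Finset.mem_filter.mpr ⟨glue_mem_iff.mpr (Or.inr (Or.inl hS₂)),
      ((isTube_compl ht hrne).mp (h2.1 S₂ hS₂)).2⟩

theorem split_glue {τ : Finset (Finset (List ℕ))} (ht : t.WF)
    (hτ : IsBinaryTubing t τ) (hsp : Split t τ r) :
    glueT t r ((τ.filter (· ⊆ dset t r)).image (shDn r))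
      (τ.filter (· ⊆ t.supp \ dset t r)) = τ := by
  have himg : ((τ.filter (· ⊆ dset t r)).image (shDn r)).image (shUp r) =
      τ.filter (· ⊆ dset t r) := by
    rw [Finset.image_image]
    refine Finset.image_congr ?_ |>.trans (Finset.image_id)
    intro S hS
    simp only [Finset.mem_coe, Finset.mem_filter] at hS
    simp only [Function.comp_apply, id_eq]
    exact shUp_shDn fun v hv => dset_pref v (hS.2 hv)
  unfold glueT
  rw [himg]
  apply Finset.Subset.antisymm
  · intro S hS
    rcases Finset.mem_insert.mp hS with rfl | hS
    · exact supp_mem ht hτ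
    · rcases Finset.mem_union.mp hS with hS | hS
      · exact (Finset.mem_filter.mp hS).1
      · exact (Finset.mem_filter.mp hS).1
  · intro S hS
    rcases eq_or_ne S t.supp with rfl | hne
    · exact Finset.mem_insert_self _ _
    · refine Finset.mem_insert_of_mem (Finset.mem_union.mpr ?_)
      rcases hsp.2.2.2.2.1 S hS hne with h | h
      · exact Or.inr (Finset.mem_filter.mpr ⟨hS, h⟩)
      · exact Or.inl (Finset.mem_filter.mpr ⟨hS, h⟩)

end Glue

section Upper
open scoped Classical

variable {I : Type} {E : I → Type} {t : PreTree I E} {τ : Finset (Finset (List ℕ))}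
  {r : List ℕ}

/-- The lower part of a split tubing, as a tubing of the subtree. -/
def lowT (t : PreTree I E) (τ : Finset (Finset (List ℕ))) (r : List ℕ) :
    Finset (Finset (List ℕ)) := (τ.filter (· ⊆ dset t r)).image (shDn r)

/-- The upper part of a split tubing, as a tubing of the complement. -/
def upT (t : PreTree I E) (τ : Finset (Finset (List ℕ))) (r : List ℕ) :
    Finset (Finset (List ℕ)) := τ.filter (· ⊆ t.supp \ dset t r)

theorem shDn_subset_iff {S T : Finset (List ℕ)} (hS : ∀ v ∈ S, r <+: v)
    (hT : ∀ v ∈ T, r <+: v) : shDn r S ⊆ shDn r T ↔ S ⊆ T := by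
  rw [← shUp_subset_iff (r := r), shUp_shDn hS, shUp_shDn hT]

theorem shDn_ssubset_iff {S T : Finset (List ℕ)} (hS : ∀ v ∈ S, r <+: v)
    (hT : ∀ v ∈ T, r <+: v) : shDn r S ⊂ shDn r T ↔ S ⊂ T := by
  rw [← shUp_ssubset_iff (r := r), shUp_shDn hS, shUp_shDn hT]

theorem not_upper_of_max {t' : PreTree I E} {υ : Finset (Finset (List ℕ))}
    {M : Finset (List ℕ)} (h : ∀ S ∈ υ, S ⊆ M) : ¬ IsUpperTube t' υ M := by
  rintro ⟨hM, T, hT, hMT, -, -⟩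
  exact absurd (lt_of_lt_of_le hMT (h T hT)) (lt_irrefl _)

theorem not_upper_supp {t' : PreTree I E} (hτ : IsBinaryTubing t' τ) :
    ¬ IsUpperTube t' τ t'.supp :=
  not_upper_of_max fun S hS => (hτ.1 S hS).subset_supp

theorem not_upper_upT_B {t' : PreTree I E} :
    ¬ IsUpperTube t' (upT t τ r) (t.supp \ dset t r) :=
  not_upper_of_max fun S hS => (Finset.mem_filter.mp hS).2

theorem not_upper_lowT_A {t' : PreTree I E} :
    ¬ IsUpperTube t' (lowT t τ r) (shDn r (dset t r)) := by
  refine not_upper_of_max fun S hS => ?_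
  obtain ⟨T, hT, rfl⟩ := Finset.mem_image.mp hS
  exact Finset.image_subset_image (Finset.mem_filter.mp hT).2

theorem upper_B (ht : t.WF) (hτ : IsBinaryTubing t τ) (hsp : Split t τ r) :
    IsUpperTube t τ (t.supp \ dset t r) := by
  obtain ⟨hr, hrne, hA, hB, hprop, hchild⟩ := hsp
  refine ⟨hB, t.supp, supp_mem ht hτ, ?_, ?_, ?_⟩
  · exact Finset.ssubset_iff_of_subset Finset.sdiff_subset |>.mpr
      ⟨r, hr, fun h => (Finset.mem_sdiff.mp h).2 (root_mem_dset hr)⟩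
  · intro Uu hUu hsu
    rcases eq_or_ne Uu t.supp with rfl | hUne
    · exact subset_rfl
    · exfalso
      rcases hprop Uu hUu hUne with h | h
      · exact nil_not_mem_dset hrne (h (hsu.subset (nil_mem_sdiff_dset ht hrne)))
      · exact absurd (lt_of_lt_of_le hsu h) (lt_irrefl _)
  · intro a ha b hb hba
    refine Finset.mem_sdiff.mpr ⟨hb, fun hbA => ?_⟩
    have : a ∈ dset t r := mem_dset.mpr
      ⟨(Finset.mem_sdiff.mp ha).1, (mem_dset.mp hbA).2.trans hba⟩
    exact (Finset.mem_sdiff.mp ha).2 this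

theorem not_upper_A (ht : t.WF) (hτ : IsBinaryTubing t τ) (hsp : Split t τ r) :
    ¬ IsUpperTube t τ (dset t r) := by
  rintro ⟨hAτ, T, hTτ, hAT, -, hup⟩
  have hTs : T = t.supp := hsp.2.2.2.2.2 T hTτ hAT
  subst hTs
  exact nil_not_mem_dset hsp.2.1
    (hup r (root_mem_dset hsp.1) [] ht.1 List.nil_prefix)

theorem upper_B_iff (ht : t.WF) (hτ : IsBinaryTubing t τ) (hsp : Split t τ r)
    {S : Finset (List ℕ)} (hS : S ∈ τ) (hSB : S ⊆ t.supp \ dset t r)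
    (hne : S ≠ t.supp \ dset t r) :
    IsUpperTube t τ S ↔ IsUpperTube t (upT t τ r) S := by
  obtain ⟨hr, hrne, hA, hB, hprop, hchild⟩ := hsp
  constructor
  · rintro ⟨hSτ, T, hTτ, hST, hmin, hup⟩
    have hTB : T ⊆ t.supp \ dset t r := hmin _ hB (lt_of_le_of_ne hSB hne)
    refine ⟨Finset.mem_filter.mpr ⟨hSτ, hSB⟩, T, Finset.mem_filter.mpr ⟨hTτ, hTB⟩,
      hST, ?_, hup⟩
    intro Uu hUu hSU
    exact hmin Uu (Finset.mem_filter.mp hUu).1 hSU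
  · rintro ⟨hSτ₂, T, hTτ₂, hST, hmin, hup⟩
    simp only [upT, Finset.mem_filter] at hSτ₂ hTτ₂
    refine ⟨hSτ₂.1, T, hTτ₂.1, hST, ?_, hup⟩
    intro Uu hUu hSU
    rcases eq_or_ne Uu t.supp with rfl | hUne
    · exact hTτ₂.2.trans Finset.sdiff_subset
    · rcases hprop Uu hUu hUne with h | h
      · exfalso
        obtain ⟨x, hx⟩ := (hτ.1 _ hSτ₂.1).nonempty
        exact Finset.disjoint_left.mp disj_dset (hSτ₂.2 hx) (h (hSU.subset hx))
      · exact hmin Uu (Finset.mem_filter.mpr ⟨hUu, h⟩) hSU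

theorem upper_A_iff (ht : t.WF) (hτ : IsBinaryTubing t τ) (hsp : Split t τ r)
    {S : Finset (List ℕ)} (hS : S ∈ τ) (hSA : S ⊆ dset t r) (hne : S ≠ dset t r) :
    IsUpperTube t τ S ↔ IsUpperTube t (lowT t τ r) (shDn r S) := by
  obtain ⟨hr, hrne, hA, hB, hprop, hchild⟩ := hsp
  have pref : ∀ v ∈ S, r <+: v := fun v hv => dset_pref v (hSA hv)
  constructor
  · rintro ⟨hSτ, T, hTτ, hST, hmin, hup⟩
    have hTA : T ⊆ dset t r := hmin _ hA (lt_of_le_of_ne hSA hne)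
    have Tpref : ∀ v ∈ T, r <+: v := fun v hv => dset_pref v (hTA hv)
    refine ⟨Finset.mem_image.mpr ⟨S, Finset.mem_filter.mpr ⟨hSτ, hSA⟩, rfl⟩,
      shDn r T, Finset.mem_image.mpr ⟨T, Finset.mem_filter.mpr ⟨hTτ, hTA⟩, rfl⟩,
      (shDn_ssubset_iff pref Tpref).mpr hST, ?_, ?_⟩
    · intro U₁ hU₁ hSU₁
      obtain ⟨Uu, hUuf, rfl⟩ := Finset.mem_image.mp hU₁
      rw [Finset.mem_filter] at hUuf
      have Upref : ∀ v ∈ Uu, r <+: v := fun v hv => dset_pref v (hUuf.2 hv)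
      have : S ⊂ Uu := (shDn_ssubset_iff pref Upref).mp hSU₁
      exact (shDn_subset_iff Tpref Upref).mpr (hmin Uu hUuf.1 this)
    · intro a' ha' b' hb' hba'
      rw [mem_shDn_iff pref] at ha' ⊢
      rw [mem_shDn_iff Tpref] at hb'
      exact hup _ ha' _ hb' ((List.prefix_append_right_inj r).mpr hba')
  · rintro ⟨hS', T', hT'τ₁, hST', hmin', hup'⟩
    obtain ⟨T, hTf, rfl⟩ := Finset.mem_image.mp hT'τ₁
    rw [Finset.mem_filter] at hTf
    have Tpref : ∀ v ∈ T, r <+: v := fun v hv => dset_pref v (hTf.2 hv)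
    refine ⟨hS, T, hTf.1, (shDn_ssubset_iff pref Tpref).mp hST', ?_, ?_⟩
    · intro Uu hUu hSU
      rcases eq_or_ne Uu t.supp with rfl | hUne
      · exact (hτ.1 T hTf.1).subset_supp
      · rcases hprop Uu hUu hUne with h | h
        · have hUpref : ∀ v ∈ Uu, r <+: v := fun v hv => dset_pref v (h hv)
          have : shDn r S ⊂ shDn r Uu := (shDn_ssubset_iff pref hUpref).mpr hSU
          have := hmin' (shDn r Uu)
            (Finset.mem_image.mpr ⟨Uu, Finset.mem_filter.mpr ⟨hUu, h⟩, rfl⟩) this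
          exact (shDn_subset_iff Tpref hUpref).mp this
        · exfalso
          obtain ⟨x, hx⟩ := (hτ.1 S hS).nonempty
          exact Finset.disjoint_left.mp disj_dset (h (hSU.subset hx)) (hSA hx)
    · intro a ha b hb hba
      have hbr : r <+: b := Tpref b hb
      obtain ⟨b', rfl⟩ : ∃ b', r ++ b' = b := hbr
      obtain ⟨a', rfl⟩ : ∃ a', r ++ a' = a := pref a ha
      rw [← mem_shDn_iff pref]
      exact hup' a' ((mem_shDn_iff pref).mpr ha) b' ((mem_shDn_iff Tpref).mpr hb)
        ((List.prefix_append_right_inj r).mp hba)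

end Upper

section RankLemmas
open scoped Classical

variable {I : Type} {E : I → Type} {t : PreTree I E} {τ : Finset (Finset (List ℕ))}
  {r : List ℕ}

theorem rank_congr (t' t'' : PreTree I E) (υ : Finset (Finset (List ℕ)))
    (v : List ℕ) : rank t' υ v = rank t'' υ v := rfl

theorem upper_congr (t' t'' : PreTree I E) (υ : Finset (Finset (List ℕ)))
    (S : Finset (List ℕ)) : IsUpperTube t' υ S ↔ IsUpperTube t'' υ S := Iff.rfl

theorem rank_root_eq (ht : t.WF) (hτ : IsBinaryTubing t τ) (hsp : Split t τ r) :
    rank t τ [] = rank t (upT t τ r) [] + 1 := by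
  have hBne : ([] : List ℕ) ∈ t.supp \ dset t r := nil_mem_sdiff_dset ht hsp.2.1
  have hset : (τ.filter fun S => IsUpperTube t τ S ∧ tubeRoot S = []) =
      insert (t.supp \ dset t r)
        ((upT t τ r).filter fun S => IsUpperTube t (upT t τ r) S ∧ tubeRoot S = []) := by
    ext S
    simp only [Finset.mem_filter, Finset.mem_insert]
    constructor
    · rintro ⟨hSτ, hup, hroot⟩
      have h0S : ([] : List ℕ) ∈ S := hroot ▸ (hτ.1 S hSτ).root_mem
      rcases eq_or_ne S t.supp with rfl | hSne
      · exact absurd hup (not_upper_supp hτ)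
      rcases hsp.2.2.2.2.1 S hSτ hSne with h | h
      · exact absurd (h h0S) (nil_not_mem_dset hsp.2.1)
      rcases eq_or_ne S (t.supp \ dset t r) with rfl | hSB
      · exact Or.inl rfl
      · refine Or.inr ⟨Finset.mem_filter.mpr ⟨hSτ, h⟩,
          (upper_B_iff ht hτ hsp hSτ h hSB).mp hup, hroot⟩
    · rintro (rfl | ⟨hSf, hup, hroot⟩)
      · exact ⟨hsp.2.2.2.1, upper_B ht hτ hsp, root_of_mem_nil hBne⟩
      · have hSf' := Finset.mem_filter.mp hSf
        have hSB : S ≠ t.supp \ dset t r := by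
          rintro rfl
          exact not_upper_upT_B hup
        exact ⟨hSf'.1, (upper_B_iff ht hτ hsp hSf'.1 hSf'.2 hSB).mpr hup, hroot⟩
  show (τ.filter fun S => IsUpperTube t τ S ∧ tubeRoot S = []).card = _ + 1
  rw [hset, Finset.card_insert_of_notMem]
  · rfl
  · intro hmem
    exact not_upper_upT_B (Finset.mem_filter.mp hmem).2.1

theorem rank_B_eq (ht : t.WF) (hτ : IsBinaryTubing t τ) (hsp : Split t τ r)
    {v : List ℕ} (hv : v ∈ t.supp \ dset t r) (hvne : v ≠ []) :
    rank t τ v = rank t (upT t τ r) v := by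
  have hset : (τ.filter fun S => IsUpperTube t τ S ∧ tubeRoot S = v) =
      ((upT t τ r).filter fun S => IsUpperTube t (upT t τ r) S ∧ tubeRoot S = v) := by
    ext S
    simp only [Finset.mem_filter]
    constructor
    · rintro ⟨hSτ, hup, hroot⟩
      have hvS : v ∈ S := hroot ▸ (hτ.1 S hSτ).root_mem
      rcases eq_or_ne S t.supp with rfl | hSne
      · exact absurd hup (not_upper_supp hτ)
      rcases hsp.2.2.2.2.1 S hSτ hSne with h | h
      · exact absurd (h hvS) (Finset.mem_sdiff.mp hv).2
      have hSB : S ≠ t.supp \ dset t r := by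
        rintro rfl
        exact hvne (by rw [← hroot, root_of_mem_nil (nil_mem_sdiff_dset ht hsp.2.1)])
      exact ⟨Finset.mem_filter.mpr ⟨hSτ, h⟩,
        ⟨(upper_B_iff ht hτ hsp hSτ h hSB).mp hup, hroot⟩⟩
    · rintro ⟨hSf, hup, hroot⟩
      have hSf' := Finset.mem_filter.mp hSf
      have hSB : S ≠ t.supp \ dset t r := by
        rintro rfl
        exact not_upper_upT_B hup
      exact ⟨hSf'.1, (upper_B_iff ht hτ hsp hSf'.1 hSf'.2 hSB).mpr hup, hroot⟩
  show (τ.filter fun S => IsUpperTube t τ S ∧ tubeRoot S = v).card = _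
  rw [hset]; rfl

theorem rank_A_eq (ht : t.WF) (hτ : IsBinaryTubing t τ) (hsp : Split t τ r)
    {v' : List ℕ} (hv' : v' ∈ (subPre t r).supp) :
    rank t τ (r ++ v') = rank t (lowT t τ r) v' := by
  have hr := hsp.1
  have hva : r ++ v' ∈ dset t r := by
    rw [subPre_supp hr] at hv'
    rwa [mem_shDn_iff dset_pref] at hv'
  show (τ.filter fun S => IsUpperTube t τ S ∧ tubeRoot S = r ++ v').card =
    ((lowT t τ r).filter fun S => IsUpperTube t (lowT t τ r) S ∧ tubeRoot S = v').card
  refine Finset.card_bij (fun S _ => shDn r S) ?_ ?_ ?_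
  · intro S hS
    rw [Finset.mem_filter] at hS
    obtain ⟨hSτ, hup, hroot⟩ := hS
    have hvS : r ++ v' ∈ S := hroot ▸ (hτ.1 S hSτ).root_mem
    rcases eq_or_ne S t.supp with rfl | hSne
    · exact absurd hup (not_upper_supp hτ)
    rcases hsp.2.2.2.2.1 S hSτ hSne with h | h
    · have hSA : S ≠ dset t r := by
        rintro rfl
        exact not_upper_A ht hτ hsp hup
      have pref : ∀ w ∈ S, r <+: w := fun w hw => dset_pref w (h hw)
      refine Finset.mem_filter.mpr ⟨Finset.mem_image.mpr
        ⟨S, Finset.mem_filter.mpr ⟨hSτ, h⟩, rfl⟩,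
        (upper_A_iff ht hτ hsp hSτ h hSA).mp hup, ?_⟩
      exact tubeRoot_eq (hasRoot_shDn pref (hroot ▸ (hτ.1 S hSτ).hasRoot))
    · exact absurd (h hvS) fun hmem => (Finset.mem_sdiff.mp hmem).2 hva
  · intro S hS T hT he
    rw [Finset.mem_filter] at hS hT
    have hSA : S ⊆ dset t r := by
      rcases eq_or_ne S t.supp with rfl | hSne
      · exact absurd hS.2.1 (not_upper_supp hτ)
      rcases hsp.2.2.2.2.1 S hS.1 hSne with h | h
      · exact h
      · exact absurd (h (hS.2.2 ▸ (hτ.1 S hS.1).root_mem))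
          fun hmem => (Finset.mem_sdiff.mp hmem).2 hva
    have hTA : T ⊆ dset t r := by
      rcases eq_or_ne T t.supp with rfl | hTne
      · exact absurd hT.2.1 (not_upper_supp hτ)
      rcases hsp.2.2.2.2.1 T hT.1 hTne with h | h
      · exact h
      · exact absurd (h (hT.2.2 ▸ (hτ.1 T hT.1).root_mem))
          fun hmem => (Finset.mem_sdiff.mp hmem).2 hva
    have : shUp r (shDn r S) = shUp r (shDn r T) := by rw [he]
    rwa [shUp_shDn (fun w hw => dset_pref w (hSA hw)),
      shUp_shDn (fun w hw => dset_pref w (hTA hw))] at this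
  · intro T' hT'
    rw [Finset.mem_filter] at hT'
    obtain ⟨hT'm, hup', hroot'⟩ := hT'
    obtain ⟨T, hTf, rfl⟩ := Finset.mem_image.mp hT'm
    rw [Finset.mem_filter] at hTf
    have pref : ∀ w ∈ T, r <+: w := fun w hw => dset_pref w (hTf.2 hw)
    have hTA : T ≠ dset t r := by
      rintro rfl
      exact not_upper_lowT_A hup'
    refine ⟨T, Finset.mem_filter.mpr ⟨hTf.1, ?_, ?_⟩, rfl⟩
    · exact (upper_A_iff ht hτ hsp hTf.1 hTf.2 hTA).mpr hup'
    · obtain ⟨ρ, hρ⟩ : ∃ ρ, r ++ ρ = tubeRoot T := pref _ (hτ.1 T hTf.1).root_mem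
      have h2 : HasRoot (shDn r T) ρ := hasRoot_shDn pref (hρ ▸ (hτ.1 T hTf.1).hasRoot)
      have h3 : ρ = v' := by rw [← hroot', tubeRoot_eq h2]
      rw [← hρ, h3]

theorem bstat_eq (ht : t.WF) (hτ : IsBinaryTubing t τ) (hsp : Split t τ r) :
    bstat τ = bstat (upT t τ r) + 1 := by
  have hset : (τ.filter fun S => ([] : List ℕ) ∈ S) =
      insert t.supp ((upT t τ r).filter fun S => ([] : List ℕ) ∈ S) := by
    ext S
    simp only [Finset.mem_filter, Finset.mem_insert]
    constructor
    · rintro ⟨hSτ, h0S⟩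
      rcases eq_or_ne S t.supp with rfl | hSne
      · exact Or.inl rfl
      rcases hsp.2.2.2.2.1 S hSτ hSne with h | h
      · exact absurd (h h0S) (nil_not_mem_dset hsp.2.1)
      · exact Or.inr ⟨Finset.mem_filter.mpr ⟨hSτ, h⟩, h0S⟩
    · rintro (rfl | ⟨hSf, h0S⟩)
      · exact ⟨supp_mem ht hτ, ht.1⟩
      · exact ⟨(Finset.mem_filter.mp hSf).1, h0S⟩
  show (τ.filter fun S => ([] : List ℕ) ∈ S).card = _ + 1
  rw [hset, Finset.card_insert_of_notMem]
  · rfl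
  · intro hmem
    have := (Finset.mem_filter.mp ((Finset.mem_filter.mp hmem).1)).2
    exact (Finset.mem_sdiff.mp (this hsp.1)).2 (root_mem_dset hsp.1)

end RankLemmas

section Assemble
open scoped Classical

variable {I : Type} {E : I → Type}

/-- The forward map of the bijection of Statement 16. -/
noncomputable def fwdT (t : PreTree I E) (ht : t.WF) (hbig : 1 < t.supp.card)
    (τh : {τ : Finset (Finset (List ℕ)) // IsBinaryTubing t τ}) :
    (Σ r : {r : List ℕ // r ∈ t.supp ∧ r ≠ []},
      {τ' : Finset (Finset (List ℕ)) // IsBinaryTubing (subPre t r.1) τ'} ×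
      {τ'' : Finset (Finset (List ℕ)) //
        IsBinaryTubing (complPre t (t.supp.filter (r.1 <+: ·))) τ''}) :=
  ⟨⟨(exists_split ht τh.2 hbig).choose, (exists_split ht τh.2 hbig).choose_spec.1,
      (exists_split ht τh.2 hbig).choose_spec.2.1⟩,
   ⟨lowT t τh.1 (exists_split ht τh.2 hbig).choose,
      sub_tubing ht τh.2 (exists_split ht τh.2 hbig).choose_spec⟩,
   ⟨upT t τh.1 (exists_split ht τh.2 hbig).choose,
      compl_tubing ht τh.2 (exists_split ht τh.2 hbig).choose_spec⟩⟩

/-- The inverse map of the bijection of Statement 16. -/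
noncomputable def invT (t : PreTree I E) (ht : t.WF)
    (y : Σ r : {r : List ℕ // r ∈ t.supp ∧ r ≠ []},
      {τ' : Finset (Finset (List ℕ)) // IsBinaryTubing (subPre t r.1) τ'} ×
      {τ'' : Finset (Finset (List ℕ)) //
        IsBinaryTubing (complPre t (t.supp.filter (r.1 <+: ·))) τ''}) :
    {τ : Finset (Finset (List ℕ)) // IsBinaryTubing t τ} :=
  ⟨glueT t y.1.1 y.2.1.1 y.2.2.1,
    (glue_tubing ht y.1.2.1 y.1.2.2 y.2.1.2 y.2.2.2).1⟩

theorem fwdT_spec (t : PreTree I E) (ht : t.WF) (hbig : 1 < t.supp.card)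
    (τh : {τ : Finset (Finset (List ℕ)) // IsBinaryTubing t τ}) :
    Split t τh.1 (fwdT t ht hbig τh).1.1 :=
  (exists_split ht τh.2 hbig).choose_spec

theorem triple_ext {t : PreTree I E}
    (a b : Σ r : {r : List ℕ // r ∈ t.supp ∧ r ≠ []},
      {τ' : Finset (Finset (List ℕ)) // IsBinaryTubing (subPre t r.1) τ'} ×
      {τ'' : Finset (Finset (List ℕ)) //
        IsBinaryTubing (complPre t (t.supp.filter (r.1 <+: ·))) τ''})
    (h1 : a.1.1 = b.1.1) (h2 : a.2.1.1 = b.2.1.1) (h3 : a.2.2.1 = b.2.2.1) :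
    a = b := by
  obtain ⟨⟨r, hr⟩, ⟨τ₁, p1⟩, ⟨τ₂, p2⟩⟩ := a
  obtain ⟨⟨r', hr'⟩, ⟨τ₁', p1'⟩, ⟨τ₂', p2'⟩⟩ := b
  dsimp at h1 h2 h3
  subst h1; subst h2; subst h3
  rfl

theorem left_invT (t : PreTree I E) (ht : t.WF) (hbig : 1 < t.supp.card)
    (τh : {τ : Finset (Finset (List ℕ)) // IsBinaryTubing t τ}) :
    invT t ht (fwdT t ht hbig τh) = τh := by
  apply Subtype.ext
  exact split_glue ht τh.2 (fwdT_spec t ht hbig τh)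

theorem right_invT (t : PreTree I E) (ht : t.WF) (hbig : 1 < t.supp.card)
    (y : Σ r : {r : List ℕ // r ∈ t.supp ∧ r ≠ []},
      {τ' : Finset (Finset (List ℕ)) // IsBinaryTubing (subPre t r.1) τ'} ×
      {τ'' : Finset (Finset (List ℕ)) //
        IsBinaryTubing (complPre t (t.supp.filter (r.1 <+: ·))) τ''}) :
    fwdT t ht hbig (invT t ht y) = y := by
  obtain ⟨⟨r, hr, hrne⟩, ⟨τ₁, h1⟩, ⟨τ₂, h2⟩⟩ := y
  have hg := glue_tubing (τ₁ := τ₁) (τ₂ := τ₂) ht hr hrne h1 h2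
  have hre : (fwdT t ht hbig (invT t ht ⟨⟨r, hr, hrne⟩, ⟨τ₁, h1⟩, ⟨τ₂, h2⟩⟩)).1.1 = r :=
    split_unique ht (fwdT_spec t ht hbig _) hg.2
  refine triple_ext _ _ hre ?_ ?_
  · show lowT t (glueT t r τ₁ τ₂) (fwdT t ht hbig (invT t ht _)).1.1 = τ₁
    rw [hre]
    exact glue_filter_A ht hr hrne h1 h2
  · show upT t (glueT t r τ₁ τ₂) (fwdT t ht hbig (invT t ht _)).1.1 = τ₂
    rw [hre]
    exact glue_filter_B ht hr hrne h1 h2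

end Assemble

/-- Let `t` be a finite rooted tree with more than one vertex.  There
is a bijection between binary tubings `τ` of `t` and triples `(t', τ', τ'')` where `t'`
is a proper subtree of `t` (a principal downset, determined by its root `r ≠ []`),
`τ' ∈ Tub(t')` and `τ'' ∈ Tub(t∖t')`; moreover `rk(τ,v) = rk(τ',v)` for `v ∈ t'`,
`rk(τ,rt t) = rk(τ'',rt t) + 1`, `rk(τ,v) = rk(τ'',v)` for the other vertices of
`t∖t'`, and `b(τ) = b(τ'') + 1`. -/
theorem statement_16 (t : PreTree Unit (fun _ => Unit)) (ht : t.WF)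
    (hbig : 1 < t.supp.card) :
    ∃ F : {τ : Finset (Finset (List ℕ)) // IsBinaryTubing t τ} ≃
      (Σ r : {r : List ℕ // r ∈ t.supp ∧ r ≠ []},
        {τ' : Finset (Finset (List ℕ)) // IsBinaryTubing (subPre t r.1) τ'} ×
        {τ'' : Finset (Finset (List ℕ)) //
          IsBinaryTubing (complPre t (t.supp.filter (r.1 <+: ·))) τ''}),
      ∀ τh : {τ : Finset (Finset (List ℕ)) // IsBinaryTubing t τ},
        -- ranks in the subtree `t'` (addresses relative to its root `r`):
        (∀ v' ∈ (subPre t (F τh).1.1).supp,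
          rank t τh.1 ((F τh).1.1 ++ v') = rank (subPre t (F τh).1.1) (F τh).2.1.1 v') ∧
        -- rank of the root of `t`:
        rank t τh.1 [] =
          rank (complPre t (t.supp.filter ((F τh).1.1 <+: ·))) (F τh).2.2.1 [] + 1 ∧
        -- ranks of the other vertices of `t ∖ t'`:
        (∀ v ∈ (complPre t (t.supp.filter ((F τh).1.1 <+: ·))).supp, v ≠ [] →
          rank t τh.1 v =
            rank (complPre t (t.supp.filter ((F τh).1.1 <+: ·))) (F τh).2.2.1 v) ∧
        -- the `b`-statistic:
        bstat τh.1 = bstat (F τh).2.2.1 + 1 := by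
  refine ⟨⟨fwdT t ht hbig, invT t ht, left_invT t ht hbig, right_invT t ht hbig⟩, ?_⟩
  intro τh
  simp only [Equiv.coe_fn_mk]
  have hsp : Split t τh.1 (fwdT t ht hbig τh).1.1 := fwdT_spec t ht hbig τh
  refine ⟨?_, ?_, ?_, ?_⟩
  · intro v' hv'
    exact rank_A_eq ht τh.2 hsp hv'
  · exact rank_root_eq ht τh.2 hsp
  · intro v hv hvne
    have hv2 : v ∈ t.supp \ dset t (fwdT t ht hbig τh).1.1 := by
      rw [← complPre_supp ht hsp.2.1]
      exact hv
    exact rank_B_eq ht τh.2 hsp hv2 hvne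
  · exact bstat_eq ht τh.2 hsp

end CK
end
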